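/- arXiv:1706.05093 — 8 statements merged into one kernel-verified Lean document; each statement's English description precedes it below -/
import Mathlib

section
/- If g : ℝⁿ → ℝ is a polynomial of degree 3 such that the gradient ∇g vanishes at every point where g vanishes, then g = c·l³ for some linear polynomial l and nonzero constant c (equivalently, g is the cube of a degree-one polynomial up to a constant factor). -/
section Univ
open Polynomial

lemma cubic_has_root_nonneg (q : Polynomial ℝ) (h3 : q.natDegree = 3)
    (hlc : 0 ≤ q.leadingCoeff) : ∃ r, q.eval r = 0 := by
  have hdpos : 0 < q.degree := by
    rw [degree_eq_natDegree (fun h => by simp [h] at h3), h3]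
    norm_num
  have htop : Filter.Tendsto (fun x => q.eval x) Filter.atTop Filter.atTop :=
    q.tendsto_atTop_of_leadingCoeff_nonneg hdpos hlc
  set p := q.comp (-Polynomial.X) with hp
  have hpdeg : p.natDegree = 3 := by
    rw [hp, natDegree_comp]
    simp [h3]
  have hplc : p.leadingCoeff ≤ 0 := by
    rw [hp, leadingCoeff_comp (by simp)]
    have : (-Polynomial.X : Polynomial ℝ).leadingCoeff = -1 := by simp
    rw [this, h3]
    norm_num
    linarith
  have hpdpos : 0 < p.degree := by
    rw [degree_eq_natDegree (fun h => by simp [h] at hpdeg), hpdeg]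
    norm_num
  have hbot : Filter.Tendsto (fun x => p.eval x) Filter.atTop Filter.atBot :=
    p.tendsto_atBot_of_leadingCoeff_nonpos hpdpos hplc
  obtain ⟨a, ha⟩ := (htop.eventually_ge_atTop 1).exists
  obtain ⟨b, hb⟩ := (hbot.eventually_le_atBot (-1)).exists
  have hb' : q.eval (-b) ≤ -1 := by
    rwa [hp, eval_comp, eval_neg, eval_X] at hb
  have hc : ContinuousOn (fun x => q.eval x) (Set.uIcc (-b) a) :=
    (Polynomial.continuous q).continuousOn
  have h0 : (0 : ℝ) ∈ Set.uIcc (q.eval (-b)) (q.eval a) := by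
    rw [Set.mem_uIcc]
    left
    constructor <;> linarith
  obtain ⟨r, _, hr⟩ := intermediate_value_uIcc hc h0
  exact ⟨r, hr⟩

lemma cubic_has_root (q : Polynomial ℝ) (h3 : q.natDegree = 3) : ∃ r, q.eval r = 0 := by
  rcases le_or_gt 0 q.leadingCoeff with h | h
  · exact cubic_has_root_nonneg q h3 h
  · obtain ⟨r, hr⟩ := cubic_has_root_nonneg (-q) (by simp [h3]) (by simp [leadingCoeff_neg]; linarith)
    exact ⟨r, by simpa using hr⟩

lemma cubic_struct (q : Polynomial ℝ) (hdeg : q.natDegree ≤ 3) (hc3 : q.coeff 3 ≠ 0)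
    (hroot : ∀ t, q.eval t = 0 → q.derivative.eval t = 0) :
    (q.coeff 2) ^ 3 = 27 * (q.coeff 3) ^ 2 * q.coeff 0 := by
  have h3 : q.natDegree = 3 := le_antisymm hdeg (le_natDegree_of_ne_zero hc3)
  obtain ⟨r, hr⟩ := cubic_has_root q h3
  have hdr : q.derivative.eval r = 0 := hroot r hr
  obtain ⟨q1, hq1⟩ := (dvd_iff_isRoot.mpr hr)
  have hq1r : q1.eval r = 0 := by
    have := hq1 ▸ hdr
    simp only [derivative_mul, derivative_sub, derivative_X, derivative_C, sub_zero, one_mul,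
      eval_add, eval_mul, eval_sub, eval_X, eval_C, sub_self, zero_mul, add_zero] at this
    simpa using this
  obtain ⟨q2, hq2⟩ := (dvd_iff_isRoot.mpr hq1r)
  have hq : q = (X - C r) ^ 2 * q2 := by rw [hq1, hq2]; ring
  have hqne : q ≠ 0 := fun h => hc3 (by simp [h])
  have hq2ne : q2 ≠ 0 := fun h => hqne (by rw [hq, h, mul_zero])
  have hnd2 : q2.natDegree = 1 := by
    have := natDegree_mul (pow_ne_zero 2 (X_sub_C_ne_zero r)) hq2ne
    rw [← hq, h3] at this
    simp [natDegree_pow, natDegree_X_sub_C] at this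
    omega
  set c := q.coeff 3 with hcdef
  have hlcq : q.leadingCoeff = c := by rw [leadingCoeff, h3]
  have hq2lc : q2.coeff 1 = c := by
    have : q.leadingCoeff = ((X - C r) ^ 2).leadingCoeff * q2.leadingCoeff :=
      by rw [hq, leadingCoeff_mul]
    rw [hlcq, ((monic_X_sub_C r).pow 2).leadingCoeff, one_mul, leadingCoeff, hnd2] at this
    exact this.symm
  have hq2form : q2 = C c * X + C (q2.coeff 0) := by
    conv_lhs => rw [eq_X_add_C_of_natDegree_le_one hnd2.le]
    rw [hq2lc]
  set b := q2.coeff 0 with hbdef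
  have hw : q2.eval (-b / c) = 0 := by
    rw [hq2form]
    simp only [eval_add, eval_mul, eval_C, eval_X]
    field_simp
    ring
  have hqw : q.eval (-b / c) = 0 := by
    rw [hq]
    simp [hw]
  have hdw := hroot _ hqw
  have hdq2 : derivative q2 = C c := by
    rw [hq2form]; simp
  have hwr : -b / c = r := by
    rw [hq, derivative_mul, hdq2] at hdw
    simp only [eval_add, eval_mul, eval_pow, eval_sub, eval_X, eval_C] at hdw
    rw [hw, mul_zero, zero_add] at hdw
    have h2 : (-b / c - r) ^ 2 = 0 := by
      rcases mul_eq_zero.mp hdw with h | h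
      · exact h
      · exact absurd h hc3
    have := pow_eq_zero_iff (n := 2) (by norm_num) |>.mp h2
    linarith [this]
  have hbr : b = -(c * r) := by
    rw [div_eq_iff hc3] at hwr
    linear_combination -hwr
  have hexp : q = C c * X ^ 3 + C (-(3 * c * r)) * X ^ 2 + C (3 * c * r ^ 2) * X
      + C (-(c * r ^ 3)) := by
    rw [hq, hq2form, hbr]
    simp only [map_neg, map_mul, map_ofNat, map_pow]
    ring
  have e2 : q.coeff 2 = -(3 * c * r) := by
    rw [hexp]
    simp only [coeff_add, coeff_C_mul, coeff_X_pow, coeff_C, Polynomial.coeff_X]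
    norm_num
  have e0 : q.coeff 0 = -(c * r ^ 3) := by
    rw [hexp]
    simp only [coeff_add, coeff_C_mul, coeff_X_pow, coeff_C, Polynomial.coeff_X]
    norm_num
  rw [e2, e0]
  ring

end Univ

open MvPolynomial


noncomputable def lineP {n : ℕ} (u v : Fin n → ℝ) : MvPolynomial (Fin n) ℝ →ₐ[ℝ] Polynomial ℝ :=
  aeval (fun i => Polynomial.C (u i) + Polynomial.C (v i) * Polynomial.X)

lemma lineP_eval {n : ℕ} (u v : Fin n → ℝ) (p : MvPolynomial (Fin n) ℝ) (t : ℝ) :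
    (lineP u v p).eval t = eval (fun i => u i + t * v i) p := by
  induction p using MvPolynomial.induction_on with
  | C a => simp [lineP]
  | add p q hp hq => simp [map_add, hp, hq]
  | mul_X p i hp =>
    rw [map_mul, Polynomial.eval_mul, hp]
    simp only [lineP, aeval_X, Polynomial.eval_add, Polynomial.eval_mul, Polynomial.eval_C,
      Polynomial.eval_X, eval_mul, eval_X]
    ring

lemma lineP_derivative {n : ℕ} (u v : Fin n → ℝ) (p : MvPolynomial (Fin n) ℝ) :
    Polynomial.derivative (lineP u v p) = ∑ i, Polynomial.C (v i) * lineP u v (pderiv i p) := by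
  induction p using MvPolynomial.induction_on with
  | C a => simp [lineP]
  | add p q hp hq => simp [map_add, hp, hq, mul_add, Finset.sum_add_distrib]
  | mul_X p i hp =>
    have key : ∀ j : Fin n,
        Polynomial.C (v j) * lineP u v (pderiv j (p * X i))
          = (Polynomial.C (v j) * lineP u v (pderiv j p)) * lineP u v (X i)
            + (if j = i then Polynomial.C (v i) * lineP u v p else 0) := by
      intro j
      rw [pderiv_mul]
      by_cases h : j = i
      · subst h
        simp [mul_add, mul_comm, mul_left_comm, mul_assoc]
      · simp only [pderiv_X_of_ne (Ne.symm h), if_neg h, mul_zero, add_zero, map_add, map_mul]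
        ring
    rw [map_mul, Polynomial.derivative_mul, hp]
    rw [Finset.sum_congr rfl fun j _ => key j, Finset.sum_add_distrib]
    simp only [Finset.sum_ite_eq', Finset.mem_univ, if_pos, Finset.sum_mul]
    have : Polynomial.derivative (lineP u v (X i)) = Polynomial.C (v i) := by
      simp [lineP]
    rw [this]
    ring

lemma lineP_natDegree_le {n : ℕ} (u v : Fin n → ℝ) (p : MvPolynomial (Fin n) ℝ) :
    (lineP u v p).natDegree ≤ p.totalDegree := by
  conv_lhs => rw [p.as_sum]
  rw [map_sum]
  refine (Polynomial.natDegree_sum_le _ _).trans ?_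
  rw [Finset.fold_max_le]
  refine ⟨Nat.zero_le _, fun m hm => ?_⟩
  rw [Function.comp_apply]
  refine le_trans ?_ (le_totalDegree hm)
  rw [lineP, aeval_monomial]
  refine (Polynomial.natDegree_mul_le).trans ?_
  have h0 : (algebraMap ℝ (Polynomial ℝ) (coeff m p)).natDegree = 0 := by
    simp [Polynomial.algebraMap_eq]
  rw [h0, zero_add]
  refine (Polynomial.natDegree_prod_le _ _).trans ?_
  rw [Finsupp.sum]
  refine Finset.sum_le_sum fun i _ => ?_
  refine (Polynomial.natDegree_pow_le).trans ?_
  have hlin : (Polynomial.C (u i) + Polynomial.C (v i) * Polynomial.X).natDegree ≤ 1 := by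
    refine (Polynomial.natDegree_add_le _ _).trans ?_
    refine max_le (by simp) ?_
    exact (Polynomial.natDegree_C_mul_le _ _).trans (by simp)
  calc m i * _ ≤ m i * 1 := Nat.mul_le_mul_left _ hlin
    _ = m i := Nat.mul_one _

lemma pderiv_totalDegree_le {n : ℕ} (i : Fin n) (p : MvPolynomial (Fin n) ℝ) {d : ℕ}
    (h : p.totalDegree ≤ d + 1) : (pderiv i p).totalDegree ≤ d := by
  conv_lhs => rw [p.as_sum]
  rw [map_sum]
  refine (totalDegree_finset_sum _ _).trans ?_
  refine Finset.sup_le fun m hm => ?_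
  rw [pderiv_monomial]
  by_cases hmi : m i = 0
  · simp [hmi]
  · refine (totalDegree_monomial_le _ _).trans ?_
    have hms : (m.sum fun _ e => e) ≤ d + 1 := (le_totalDegree hm).trans h
    have hsub : m - Finsupp.single i 1 + Finsupp.single i 1 = m := by
      ext j
      by_cases hj : j = i
      · subst hj; simp [Nat.sub_add_cancel (Nat.one_le_iff_ne_zero.mpr hmi)]
      · simp [Finsupp.single_apply, Ne.symm hj, hj]
    have : ((m - Finsupp.single i 1).sum fun _ e => e) + 1 = m.sum fun _ e => e := by
      conv_rhs => rw [← hsub]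
      rw [Finsupp.sum_add_index' (fun _ => rfl) (fun _ _ _ => rfl)]
      simp
    have hid : ((m - Finsupp.single i 1).sum fun _ => id) =
        ((m - Finsupp.single i 1).sum fun _ e => e) := rfl
    omega

lemma totalDegree_zero_eq_C {n : ℕ} (p : MvPolynomial (Fin n) ℝ) (h : p.totalDegree = 0) :
    p = C (coeff 0 p) := by
  have := p.sum_homogeneousComponent
  rw [h] at this
  simpa [homogeneousComponent_zero] using this.symm

lemma lineP_zero_monomial {n : ℕ} (v : Fin n → ℝ) (m : Fin n →₀ ℕ) (r : ℝ) :
    lineP 0 v (monomial m r) =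
      Polynomial.C (r * m.prod fun i k => v i ^ k) * Polynomial.X ^ (m.sum fun _ e => e) := by
  rw [lineP, aeval_monomial]
  simp only [Pi.zero_apply, Polynomial.C_0, zero_add]
  have : (m.prod fun i k => (Polynomial.C (v i) * Polynomial.X) ^ k) =
      Polynomial.C (m.prod fun i k => v i ^ k) * Polynomial.X ^ (m.sum fun _ e => e) := by
    rw [Finsupp.prod, Finsupp.sum, Finsupp.prod, map_prod, ← Finset.prod_pow_eq_pow_sum,
      ← Finset.prod_mul_distrib]
    refine Finset.prod_congr rfl fun i _ => ?_
    rw [mul_pow, map_pow]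
  rw [this, Polynomial.algebraMap_eq, ← mul_assoc, ← Polynomial.C_mul]

lemma lineP_zero_coeff {n : ℕ} (v : Fin n → ℝ) (p : MvPolynomial (Fin n) ℝ) (d : ℕ) :
    (lineP 0 v p).coeff d = eval v (homogeneousComponent d p) := by
  conv_lhs => rw [p.as_sum]
  rw [map_sum, Polynomial.finset_sum_coeff]
  rw [homogeneousComponent_apply, map_sum]
  rw [Finset.sum_filter]
  refine Finset.sum_congr rfl fun m hm => ?_
  rw [lineP_zero_monomial, Polynomial.coeff_C_mul, Polynomial.coeff_X_pow]
  by_cases h : (m.sum fun _ e => e) = d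
  · have h' : m.degree = d := h
    simp [h, h', eval_monomial]
  · have h' : ¬ m.degree = d := h
    simp [h, h', Ne.symm h]

lemma top_hc_ne_zero {n : ℕ} (p : MvPolynomial (Fin n) ℝ) (hp : p ≠ 0) :
    homogeneousComponent p.totalDegree p ≠ 0 := by
  obtain ⟨m, hm, hdeg⟩ := p.support.exists_mem_eq_sup
    (Finset.nonempty_iff_ne_empty.mpr (fun h => hp (support_eq_empty.mp h))) fun m => m.sum fun _ e => e
  intro h
  have : coeff m (homogeneousComponent p.totalDegree p) = coeff m p := by
    rw [coeff_homogeneousComponent]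
    rw [if_pos]
    show (m.sum fun _ e => e) = p.totalDegree
    rw [totalDegree, hdeg]
  rw [h] at this
  simp only [coeff_zero] at this
  exact (mem_support_iff.mp hm) this.symm

lemma exists_eval_ne {n : ℕ} (p : MvPolynomial (Fin n) ℝ) (hp : p ≠ 0) :
    ∃ v : Fin n → ℝ, eval v p ≠ 0 := by
  by_contra h
  push_neg at h
  exact hp (MvPolynomial.funext fun x => by simp [h x])



lemma lineP_eval_zero {n : ℕ} (u v : Fin n → ℝ) (p : MvPolynomial (Fin n) ℝ) :
    (lineP u v p).eval 0 = eval u p := by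
  have h : (fun i => u i + 0 * v i) = u := funext fun i => by ring
  rw [lineP_eval, h]

lemma lineP_derivative_two {n : ℕ} (u v : Fin n → ℝ) (g : MvPolynomial (Fin n) ℝ) :
    Polynomial.derivative (Polynomial.derivative (lineP u v g))
      = ∑ i, ∑ j, Polynomial.C (v i * v j) * lineP u v (pderiv j (pderiv i g)) := by
  rw [lineP_derivative, map_sum]
  refine Finset.sum_congr rfl fun i _ => ?_
  rw [Polynomial.derivative_C_mul, lineP_derivative, Finset.mul_sum]
  refine Finset.sum_congr rfl fun j _ => ?_
  rw [map_mul]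
  ring

lemma lineP_coeff_two {n : ℕ} (u v : Fin n → ℝ) (g : MvPolynomial (Fin n) ℝ) :
    (lineP u v g).coeff 2
      = (1/2) * ∑ i, ∑ j, v i * v j * eval u (pderiv j (pderiv i g)) := by
  have h0 : (Polynomial.derivative (Polynomial.derivative (lineP u v g))).coeff 0
      = 2 * (lineP u v g).coeff 2 := by
    simp [Polynomial.coeff_derivative]
    ring
  have h1 : (Polynomial.derivative (Polynomial.derivative (lineP u v g))).coeff 0
      = ∑ i, ∑ j, v i * v j * eval u (pderiv j (pderiv i g)) := by
    rw [Polynomial.coeff_zero_eq_eval_zero, lineP_derivative_two]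
    rw [Polynomial.eval_finset_sum]
    refine Finset.sum_congr rfl fun i _ => ?_
    rw [Polynomial.eval_finset_sum]
    refine Finset.sum_congr rfl fun j _ => ?_
    rw [Polynomial.eval_mul, Polynomial.eval_C, lineP_eval_zero]
  rw [h0] at h1
  linarith

lemma lineP_coeff_three {n : ℕ} (u v : Fin n → ℝ) (g : MvPolynomial (Fin n) ℝ) :
    (lineP u v g).coeff 3
      = (1/6) * ∑ i, ∑ j, ∑ k, v i * v j * v k
          * eval u (pderiv k (pderiv j (pderiv i g))) := by
  have h0 : (Polynomial.derivative (Polynomial.derivative (Polynomial.derivative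
      (lineP u v g)))).coeff 0 = 6 * (lineP u v g).coeff 3 := by
    simp [Polynomial.coeff_derivative]
    ring
  have h1 : (Polynomial.derivative (Polynomial.derivative (Polynomial.derivative
      (lineP u v g)))).coeff 0
      = ∑ i, ∑ j, ∑ k, v i * v j * v k * eval u (pderiv k (pderiv j (pderiv i g))) := by
    have h2 : Polynomial.derivative (Polynomial.derivative (Polynomial.derivative
        (lineP u v g)))
        = ∑ i, ∑ j, ∑ k, Polynomial.C (v i * v j * v k)
            * lineP u v (pderiv k (pderiv j (pderiv i g))) := by
      rw [lineP_derivative, map_sum, map_sum]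
      refine Finset.sum_congr rfl fun i _ => ?_
      rw [Polynomial.derivative_C_mul, Polynomial.derivative_C_mul, lineP_derivative_two,
        Finset.mul_sum]
      refine Finset.sum_congr rfl fun j _ => ?_
      rw [Finset.mul_sum]
      refine Finset.sum_congr rfl fun k _ => ?_
      simp only [map_mul]
      ring
    rw [Polynomial.coeff_zero_eq_eval_zero, h2]
    rw [Polynomial.eval_finset_sum]
    refine Finset.sum_congr rfl fun i _ => ?_
    rw [Polynomial.eval_finset_sum]
    refine Finset.sum_congr rfl fun j _ => ?_
    rw [Polynomial.eval_finset_sum]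
    refine Finset.sum_congr rfl fun k _ => ?_
    rw [Polynomial.eval_mul, Polynomial.eval_C, lineP_eval_zero]
  rw [h0] at h1
  linarith


lemma lineP_coeff3_indep {n : ℕ} (u v : Fin n → ℝ) (g : MvPolynomial (Fin n) ℝ)
    (hdeg : g.totalDegree ≤ 3) :
    (lineP u v g).coeff 3 = (lineP 0 v g).coeff 3 := by
  rw [lineP_coeff_three, lineP_coeff_three]
  congr 1
  refine Finset.sum_congr rfl fun i _ => ?_
  refine Finset.sum_congr rfl fun j _ => ?_
  refine Finset.sum_congr rfl fun k _ => ?_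
  congr 1
  have h0 : (pderiv k (pderiv j (pderiv i g))).totalDegree ≤ 0 :=
    pderiv_totalDegree_le k _ (pderiv_totalDegree_le j _ (pderiv_totalDegree_le i _ hdeg))
  have hC := totalDegree_zero_eq_C _ (Nat.le_zero.mp h0)
  rw [hC, eval_C, eval_C]

theorem stmt_0 (n : ℕ) (g : MvPolynomial (Fin n) ℝ)
    (hdeg : g.totalDegree = 3)
    (hgrad : ∀ x : Fin n → ℝ, eval x g = 0 → ∀ i, eval x (pderiv i g) = 0) :
    ∃ (c : ℝ) (l : MvPolynomial (Fin n) ℝ),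
      c ≠ 0 ∧ l.totalDegree = 1 ∧ g = C c * l ^ 3 := by
  have hgne : g ≠ 0 := by
    intro h
    rw [h] at hdeg
    simp at hdeg
  have hh3 : homogeneousComponent 3 g ≠ 0 := by
    have := top_hc_ne_zero g hgne
    rwa [hdeg] at this
  obtain ⟨v, hv⟩ := exists_eval_ne _ hh3
  set c : ℝ := eval v (homogeneousComponent 3 g) with hcdef
  set P : MvPolynomial (Fin n) ℝ :=
    C (1/2) * ∑ i, ∑ j, C (v i * v j) * pderiv j (pderiv i g) with hP
  have hPeval : ∀ u, eval u P = (lineP u v g).coeff 2 := by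
    intro u
    rw [lineP_coeff_two, hP, eval_mul, eval_C, map_sum]
    congr 1
    refine Finset.sum_congr rfl fun i _ => ?_
    rw [map_sum]
    refine Finset.sum_congr rfl fun j _ => ?_
    rw [eval_mul, eval_C]
  have key : ∀ u : Fin n → ℝ, (eval u P) ^ 3 = 27 * c ^ 2 * eval u g := by
    intro u
    have hcoeff3 : (lineP u v g).coeff 3 = c := by
      rw [lineP_coeff3_indep u v g hdeg.le, lineP_zero_coeff]
    have hnd : (lineP u v g).natDegree ≤ 3 := by
      have := lineP_natDegree_le u v g
      rwa [hdeg] at this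
    have hroot : ∀ t, (lineP u v g).eval t = 0 →
        (Polynomial.derivative (lineP u v g)).eval t = 0 := by
      intro t ht
      rw [lineP_eval] at ht
      rw [lineP_derivative, Polynomial.eval_finset_sum]
      refine Finset.sum_eq_zero fun i _ => ?_
      rw [Polynomial.eval_mul, Polynomial.eval_C, lineP_eval, hgrad _ ht i, mul_zero]
    have hstruct := cubic_struct _ hnd (by rw [hcoeff3]; exact hv) hroot
    rw [hcoeff3] at hstruct
    have hc0 : (lineP u v g).coeff 0 = eval u g := by
      rw [Polynomial.coeff_zero_eq_eval_zero, lineP_eval_zero]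
    rw [hPeval u, hstruct, hc0]
  have hc27 : (27 * c ^ 2) ≠ 0 := by
    have : c ≠ 0 := hv
    positivity
  have hident : P ^ 3 = C (27 * c ^ 2) * g := by
    refine MvPolynomial.funext fun x => ?_
    rw [map_pow, key x, eval_mul, eval_C]
  have hgid : g = C ((27 * c ^ 2)⁻¹) * P ^ 3 := by
    rw [hident, ← mul_assoc, ← C_mul, inv_mul_cancel₀ hc27, C_1, one_mul]
  have hPne : P ≠ 0 := by
    intro h
    apply hgne
    have : (0 : MvPolynomial (Fin n) ℝ) = C (27 * c ^ 2) * g := by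
      rw [← hident, h]
      ring
    have hC : (C (27 * c ^ 2) : MvPolynomial (Fin n) ℝ) ≠ 0 := by
      simpa using hc27
    rcases mul_eq_zero.mp this.symm with h' | h'
    · exact absurd h' hC
    · exact h'
  obtain ⟨w, hw⟩ := exists_eval_ne _ (top_hc_ne_zero P hPne)
  have hndP : (lineP 0 w P).natDegree = P.totalDegree := by
    refine le_antisymm (lineP_natDegree_le _ _ _) ?_
    refine Polynomial.le_natDegree_of_ne_zero ?_
    rw [lineP_zero_coeff]
    exact hw
  have h3N : 3 * P.totalDegree ≤ 3 := by
    have hcube : (lineP 0 w (P ^ 3)) = (lineP 0 w P) ^ 3 := map_pow _ _ _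
    have heq : (lineP 0 w (P ^ 3)).natDegree = 3 * P.totalDegree := by
      rw [hcube, Polynomial.natDegree_pow, hndP]
    have hle : (lineP 0 w (P ^ 3)).natDegree ≤ 3 := by
      rw [hident, map_mul]
      have hCk : lineP 0 w (C (27 * c ^ 2)) = Polynomial.C (27 * c ^ 2) := by
        simp [lineP]
      rw [hCk]
      refine (Polynomial.natDegree_C_mul_le _ _).trans ?_
      have := lineP_natDegree_le (0 : Fin n → ℝ) w g
      rwa [hdeg] at this
    omega
  have hN0 : P.totalDegree ≠ 0 := by
    intro h0
    have hPC := totalDegree_zero_eq_C P h0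
    have : g.totalDegree = 0 := by
      rw [hgid, hPC, ← C_pow, ← C_mul]
      exact totalDegree_C _
    omega
  have hN1 : P.totalDegree = 1 := by omega
  exact ⟨(27 * c ^ 2)⁻¹, P, inv_ne_zero hc27, hN1, hgid⟩
end

section
/- Every irreducible cubic polynomial f : ℝⁿ → ℝ (n ≥ 2) whose real zero set is nonempty has a regular point on its zero set: there exists x₀ with f(x₀) = 0 and ∇f(x₀) ≠ 0. -/
open MvPolynomial

noncomputable def linePoly {n : ℕ} (x v : Fin n → ℝ) (f : MvPolynomial (Fin n) ℝ) : Polynomial ℝ :=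
  MvPolynomial.aeval (fun i => Polynomial.C (x i) + Polynomial.C (v i) * Polynomial.X) f

lemma linePoly_eval {n : ℕ} (x v : Fin n → ℝ) (f : MvPolynomial (Fin n) ℝ) (s : ℝ) :
    (linePoly x v f).eval s = eval (fun i => x i + v i * s) f := by
  induction f using MvPolynomial.induction_on with
  | C a => simp [linePoly]
  | add p q hp hq => simp [linePoly, map_add] at hp hq ⊢; rw [hp, hq]
  | mul_X p i hp => simp only [linePoly, map_mul, aeval_X, Polynomial.eval_mul,
      Polynomial.eval_add, Polynomial.eval_C, Polynomial.eval_X, eval_mul, eval_X] at hp ⊢; rw [hp]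

lemma linePoly_derivative {n : ℕ} (x v : Fin n → ℝ) (f : MvPolynomial (Fin n) ℝ) :
    (linePoly x v f).derivative = ∑ i, Polynomial.C (v i) * linePoly x v (pderiv i f) := by
  induction f using MvPolynomial.induction_on with
  | C a => simp [linePoly]
  | add p q hp hq =>
      simp only [linePoly, map_add, Polynomial.derivative_add] at hp hq ⊢
      rw [hp, hq, ← Finset.sum_add_distrib]
      congr 1; funext i; ring
  | mul_X p j hp =>
      simp only [linePoly, map_mul, aeval_X, Polynomial.derivative_mul] at hp ⊢
      rw [hp]
      have hd : ∀ i : Fin n, pderiv i (p * X j) = pderiv i p * X j + p * (if j = i then 1 else 0) := by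
        intro i
        rw [pderiv_mul, pderiv_X]
        simp [Pi.single_apply]
      simp only [hd, map_add, map_mul, aeval_X]
      have hsplit : ∀ i : Fin n,
          Polynomial.C (v i) *
            ((aeval fun k => Polynomial.C (x k) + Polynomial.C (v k) * Polynomial.X) ((pderiv i) p) *
                (Polynomial.C (x j) + Polynomial.C (v j) * Polynomial.X) +
              (aeval fun k => Polynomial.C (x k) + Polynomial.C (v k) * Polynomial.X) p *
                (aeval fun k => Polynomial.C (x k) + Polynomial.C (v k) * Polynomial.X)
                  ((if j = i then 1 else 0) : MvPolynomial (Fin n) ℝ)) =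
          Polynomial.C (v i) *
            (aeval fun k => Polynomial.C (x k) + Polynomial.C (v k) * Polynomial.X) ((pderiv i) p) *
               (Polynomial.C (x j) + Polynomial.C (v j) * Polynomial.X) +
          (if j = i then Polynomial.C (v i) *
            (aeval fun k => Polynomial.C (x k) + Polynomial.C (v k) * Polynomial.X) p else 0) := by
        intro i
        by_cases h : j = i <;> simp [h] <;> ring
      rw [Finset.sum_congr rfl (fun i _ => hsplit i), Finset.sum_add_distrib, ← Finset.sum_mul,
        Finset.sum_ite_eq Finset.univ j]
      simp only [Finset.mem_univ, if_true]
      simp only [Polynomial.derivative_add, Polynomial.derivative_C, Polynomial.derivative_mul,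
        Polynomial.derivative_X, mul_one, mul_zero, zero_add, add_zero, zero_mul]
      ring

lemma linePoly_natDegree {n : ℕ} (x v : Fin n → ℝ) (f : MvPolynomial (Fin n) ℝ) :
    (linePoly x v f).natDegree ≤ f.totalDegree := by
  unfold linePoly
  conv_lhs => rw [f.as_sum, map_sum]
  apply Polynomial.natDegree_sum_le_of_forall_le
  intro m hm
  rw [aeval_monomial]
  refine (Polynomial.natDegree_mul_le).trans ?_
  have h1 : (algebraMap ℝ (Polynomial ℝ) (coeff m f)).natDegree = 0 := Polynomial.natDegree_C _
  rw [h1, zero_add]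
  refine (Polynomial.natDegree_prod_le _ _).trans ?_
  have h2 : ∀ i ∈ m.support, ((Polynomial.C (x i) + Polynomial.C (v i) * Polynomial.X) ^ (m i)).natDegree ≤ m i := by
    intro i _
    refine (Polynomial.natDegree_pow_le).trans ?_
    have : (Polynomial.C (x i) + Polynomial.C (v i) * Polynomial.X).natDegree ≤ 1 := by
      refine (Polynomial.natDegree_add_le _ _).trans ?_
      simp [Polynomial.natDegree_C_mul_le]
      exact (Polynomial.natDegree_C_mul_le _ _).trans (by simp)
    calc (m i) * (Polynomial.C (x i) + Polynomial.C (v i) * Polynomial.X).natDegree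
        ≤ m i * 1 := Nat.mul_le_mul_left _ this
      _ = m i := Nat.mul_one _
  refine (Finset.sum_le_sum h2).trans ?_
  have := MvPolynomial.le_totalDegree hm
  rwa [Finsupp.sum] at this

open Polynomial in
lemma cubic_struct_s3 (g : Polynomial ℝ) (h3 : g.natDegree ≤ 3)
    (h0 : g.eval 0 < 0) (h1 : 0 < g.eval 1)
    (hcrit : ∀ t : ℝ, g.eval t = 0 → g.derivative.eval t = 0) :
    ∃ e r : ℝ, g = Polynomial.C e * (Polynomial.X - Polynomial.C r) ^ 3 := by
  obtain ⟨r, hr01, hr⟩ : ∃ r ∈ Set.Ioo (0:ℝ) 1, g.eval r = 0 := by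
    have hc : ContinuousOn (fun t => g.eval t) (Set.Icc (0:ℝ) 1) := g.continuous.continuousOn
    have hsub := intermediate_value_Ioo (zero_le_one) hc
    have h0mem : (0:ℝ) ∈ Set.Ioo (g.eval 0) (g.eval 1) := ⟨h0, h1⟩
    obtain ⟨r, hr01, hr⟩ := hsub h0mem
    exact ⟨r, hr01, hr⟩
  have hg0 : g ≠ 0 := fun h => by simp [h] at h0
  obtain ⟨k, hk⟩ : (Polynomial.X - Polynomial.C r) ∣ g := (dvd_iff_isRoot).mpr hr
  have hdk : g.derivative = k + (Polynomial.X - Polynomial.C r) * k.derivative := by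
    rw [hk, derivative_mul]; simp
  have hkr : k.eval r = 0 := by
    have := hcrit r hr
    rw [hdk] at this
    simpa using this
  obtain ⟨h, hh⟩ : (Polynomial.X - Polynomial.C r) ∣ k := (dvd_iff_isRoot).mpr hkr
  have hgh : g = (Polynomial.X - Polynomial.C r) ^ 2 * h := by rw [hk, hh]; ring
  have hhne : h ≠ 0 := fun h0' => hg0 (by rw [hgh, h0', mul_zero])
  have hdegh : h.natDegree ≤ 1 := by
    have : g.natDegree = 2 + h.natDegree := by
      rw [hgh, Polynomial.natDegree_mul (pow_ne_zero _ (X_sub_C_ne_zero r)) hhne,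
        Polynomial.natDegree_pow]
      simp
    omega
  obtain ⟨a, b, hab⟩ := Polynomial.exists_eq_X_add_C_of_natDegree_le_one hdegh
  have hrne0 : r ≠ 0 := ne_of_gt hr01.1
  have hrne1 : r ≠ 1 := ne_of_lt hr01.2
  by_cases ha : a = 0
  · exfalso
    subst ha
    rw [hab] at hgh
    simp only [map_zero, zero_mul, zero_add] at hgh
    have e0 : g.eval 0 = r ^ 2 * b := by rw [hgh]; simp
    have e1 : g.eval 1 = (1 - r) ^ 2 * b := by rw [hgh]; simp
    rw [e0] at h0; rw [e1] at h1
    have hr2 : 0 < r ^ 2 := by positivity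
    have hb : b < 0 := by nlinarith
    nlinarith [sq_nonneg (1 - r)]
  · have hzero : a * (-b / a) + b = 0 := by field_simp; ring
    have hu : g.eval (-b / a) = 0 := by
      rw [hgh, hab]
      simp only [Polynomial.eval_mul, Polynomial.eval_pow, Polynomial.eval_sub, Polynomial.eval_X, Polynomial.eval_C, Polynomial.eval_add]
      rw [hzero, mul_zero]
    have hcu := hcrit _ hu
    have hdg : g.derivative = 2 * (Polynomial.X - Polynomial.C r) * h + (Polynomial.X - Polynomial.C r) ^ 2 * Polynomial.C a := by
      conv_lhs => rw [hgh]
      rw [hab, derivative_mul, derivative_pow, derivative_sub, derivative_X, derivative_C,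
        derivative_add, derivative_mul, derivative_C, derivative_X]
      simp only [derivative_C, Nat.cast_ofNat, map_ofNat]
      ring
    rw [hdg] at hcu
    have hhu : h.eval (-b/a) = 0 := by
      rw [hab]
      simp only [Polynomial.eval_add, Polynomial.eval_mul, Polynomial.eval_C, Polynomial.eval_X]
      exact hzero
    have heval : ((-b/a) - r) ^ 2 * a = 0 := by
      have := hcu
      simp only [Polynomial.eval_add, Polynomial.eval_mul, Polynomial.eval_pow, Polynomial.eval_sub, Polynomial.eval_X, Polynomial.eval_C, Polynomial.eval_ofNat] at this
      rw [hhu] at this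
      linarith
    have hur : -b / a = r := by
      rcases mul_eq_zero.mp heval with h' | h'
      · have := pow_eq_zero_iff (n := 2) (by norm_num) |>.mp h'
        linarith
      · exact absurd h' ha
    refine ⟨a, r, ?_⟩
    have hb : b = -(a * r) := by
      field_simp at hur
      linarith
    rw [hgh, hab, hb]
    simp only [map_neg, map_mul]
    ring

lemma homog_eval_smul {n : ℕ} {φ : MvPolynomial (Fin n) ℝ} {k : ℕ}
    (hφ : φ.IsHomogeneous k) (t : ℝ) (v : Fin n → ℝ) :
    eval (fun i => t * v i) φ = t ^ k * eval v φ := by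
  rw [eval_eq, eval_eq, Finset.mul_sum]
  apply Finset.sum_congr rfl
  intro d hd
  have hdeg : ∑ i ∈ d.support, d i = k := by
    have := hφ (mem_support_iff.mp hd)
    rw [← this]
    simp [Finsupp.weight, Finsupp.linearCombination, Finsupp.sum]
  have : ∏ i ∈ d.support, (t * v i) ^ d i
      = t ^ k * ∏ i ∈ d.support, v i ^ d i := by
    rw [← hdeg, ← Finset.prod_pow_eq_pow_sum]
    rw [← Finset.prod_mul_distrib]
    apply Finset.prod_congr rfl
    intro i _
    rw [mul_pow]
  rw [this]; ring

lemma cubic_pos (a b c d : ℝ) (ha : 0 < a) : ∃ t : ℝ, 0 < a*t^3 + b*t^2 + c*t + d := by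
  obtain ⟨T, hT1, haT⟩ : ∃ T : ℝ, 1 ≤ T ∧ |b| + |c| + |d| + a ≤ a * T := by
    refine ⟨(|b| + |c| + |d|) / a + 1, ?_, ?_⟩
    · have h0 : 0 ≤ (|b| + |c| + |d|) / a := by positivity
      linarith
    · rw [mul_add, mul_one, mul_div_cancel₀ _ (ne_of_gt ha)]
  refine ⟨T, ?_⟩
  nlinarith [le_abs_self b, neg_abs_le b, le_abs_self c, neg_abs_le c, le_abs_self d, neg_abs_le d,
    abs_nonneg b, abs_nonneg c, abs_nonneg d, sq_nonneg T, mul_pos ha (lt_of_lt_of_le one_pos hT1)]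

lemma cubic_signs (a b c d : ℝ) (ha : a ≠ 0) :
    (∃ t : ℝ, 0 < a*t^3 + b*t^2 + c*t + d) ∧ (∃ t : ℝ, a*t^3 + b*t^2 + c*t + d < 0) := by
  rcases ha.lt_or_gt with h | h
  · obtain ⟨t1, ht1⟩ := cubic_pos (-a) b (-c) d (by linarith)
    obtain ⟨t2, ht2⟩ := cubic_pos (-a) (-b) (-c) (-d) (by linarith)
    constructor
    · exact ⟨-t1, by nlinarith [ht1]⟩
    · exact ⟨t2, by nlinarith [ht2]⟩
  · obtain ⟨t1, ht1⟩ := cubic_pos a b c d h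
    obtain ⟨t2, ht2⟩ := cubic_pos a (-b) c (-d) h
    constructor
    · exact ⟨t1, ht1⟩
    · exact ⟨-t2, by nlinarith [ht2]⟩

lemma mv_eval_analytic {n : ℕ} (f : MvPolynomial (Fin n) ℝ) :
    AnalyticOnNhd ℝ (fun x : Fin n → ℝ => eval x f) Set.univ := by
  have := AnalyticOnNhd.eval_continuousLinearMap (ContinuousLinearMap.id ℝ (Fin n → ℝ)) f
  simpa using this

lemma mv_eval_continuous {n : ℕ} (f : MvPolynomial (Fin n) ℝ) :
    Continuous (fun x : Fin n → ℝ => eval x f) := by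
  rw [continuous_iff_continuousAt]
  exact fun x => ((mv_eval_analytic f) x (Set.mem_univ x)).continuousAt

theorem stmt_3 (n : ℕ) (hn : 2 ≤ n) (f : MvPolynomial (Fin n) ℝ)
    (hirr : Irreducible f) (hdeg : f.totalDegree = 3)
    (hzero : ∃ x : Fin n → ℝ, eval x f = 0) :
    ∃ x₀ : Fin n → ℝ, eval x₀ f = 0 ∧ ∃ i, eval x₀ (pderiv i f) ≠ 0 := by
  by_contra hcon
  push_neg at hcon
  -- hcon : ∀ x, eval x f = 0 → ∀ i, eval x (pderiv i f) = 0
  have hfne : f ≠ 0 := hirr.ne_zero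
  -- the top homogeneous component is nonzero
  have hH3 : homogeneousComponent 3 f ≠ 0 := by
    obtain ⟨m, hm, hdm⟩ : ∃ m ∈ f.support, Finsupp.degree m = 3 := by
      obtain ⟨m, hm, hmax⟩ := Finset.exists_mem_eq_sup f.support
        (support_nonempty.mpr hfne) (fun s => s.sum fun _ e => e)
      refine ⟨m, hm, ?_⟩
      have : f.totalDegree = m.sum fun _ e => e := hmax
      rw [← hdeg, this]
      rfl
    intro h
    have hco := coeff_homogeneousComponent (n := 3) m (φ := f)
    rw [h, hdm] at hco
    simp only [coeff_zero, if_pos rfl] at hco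
    exact (mem_support_iff.mp hm) hco.symm
  -- a direction where the top form does not vanish
  obtain ⟨v, hv⟩ : ∃ v : Fin n → ℝ, eval v (homogeneousComponent 3 f) ≠ 0 := by
    by_contra h
    push_neg at h
    exact hH3 (MvPolynomial.funext fun x => by rw [h x, map_zero])
  -- decomposition along the line t ↦ t • v
  have hdecomp : ∀ t : ℝ, eval (fun i => t * v i) f
      = eval v (homogeneousComponent 3 f) * t^3 + eval v (homogeneousComponent 2 f) * t^2
        + eval v (homogeneousComponent 1 f) * t + eval v (homogeneousComponent 0 f) := by
    intro t
    conv_lhs => rw [← f.sum_homogeneousComponent, hdeg]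
    rw [map_sum]
    have : ∀ k ∈ Finset.range 4, eval (fun i => t * v i) (homogeneousComponent k f)
        = t ^ k * eval v (homogeneousComponent k f) := fun k _ =>
      homog_eval_smul (homogeneousComponent_isHomogeneous k f) t v
    rw [Finset.sum_congr rfl this]
    simp [Finset.sum_range_succ]
    ring
  -- f takes both signs
  obtain ⟨⟨t1, ht1⟩, ⟨t2, ht2⟩⟩ := cubic_signs (eval v (homogeneousComponent 3 f))
    (eval v (homogeneousComponent 2 f)) (eval v (homogeneousComponent 1 f))
    (eval v (homogeneousComponent 0 f)) hv
  set p : Fin n → ℝ := fun i => t2 * v i with hp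
  set q : Fin n → ℝ := fun i => t1 * v i with hq
  have hD : eval p f < 0 := by rw [hp, hdecomp t2]; nlinarith [ht2]
  have hQ : 0 < eval q f := by rw [hq, hdecomp t1]; nlinarith [ht1]
  set D : ℝ := eval p f with hDdef
  set c : Fin n → ℝ := fun i => eval p (pderiv i f) with hc
  -- the key pointwise identity on the open set {f > 0}
  have hkey : ∀ x : Fin n → ℝ, 0 < eval x f →
      27 * D^2 * eval x f = (3*D + ∑ i, c i * (x i - p i))^3 := by
    intro x hx
    set w : Fin n → ℝ := fun i => x i - p i with hw
    set g := linePoly p w f with hg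
    have hg0 : g.eval 0 = D := by
      rw [hg, linePoly_eval]
      have hfun : (fun i => p i + w i * 0) = p := by funext i; ring
      rw [hfun]
    have hg1 : g.eval 1 = eval x f := by
      rw [hg, linePoly_eval]
      have hfun : (fun i => p i + w i * 1) = x := by funext i; rw [hw]; ring
      rw [hfun]
    have hgdeg : g.natDegree ≤ 3 := by
      rw [hg]
      exact (linePoly_natDegree p w f).trans (le_of_eq hdeg)
    have hcrit : ∀ t : ℝ, g.eval t = 0 → g.derivative.eval t = 0 := by
      intro t ht
      rw [hg, linePoly_eval] at ht
      rw [hg, linePoly_derivative, Polynomial.eval_finset_sum]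
      apply Finset.sum_eq_zero
      intro i _
      rw [Polynomial.eval_mul, Polynomial.eval_C, linePoly_eval]
      rw [hcon _ ht i, mul_zero]
    obtain ⟨e, r, hge⟩ := cubic_struct_s3 g hgdeg (by rw [hg0]; exact hD) (by rw [hg1]; exact hx) hcrit
    have hD' : D = e * (0 - r)^3 := by
      rw [← hg0, hge]
      simp only [Polynomial.eval_mul, Polynomial.eval_pow, Polynomial.eval_sub,
        Polynomial.eval_X, Polynomial.eval_C]
    have hx' : eval x f = e * (1 - r)^3 := by
      rw [← hg1, hge]
      simp only [Polynomial.eval_mul, Polynomial.eval_pow, Polynomial.eval_sub,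
        Polynomial.eval_X, Polynomial.eval_C]
    have hsum : ∑ i, c i * (x i - p i) = 3 * e * r^2 := by
      have h1 : g.derivative.eval 0 = ∑ i, w i * eval p (pderiv i f) := by
        rw [hg, linePoly_derivative, Polynomial.eval_finset_sum]
        apply Finset.sum_congr rfl
        intro i _
        rw [Polynomial.eval_mul, Polynomial.eval_C, linePoly_eval]
        have hfun : (fun j => p j + w j * 0) = p := by funext j; ring
        rw [hfun]
      have h2 : g.derivative.eval 0 = 3 * e * r^2 := by
        rw [hge, Polynomial.derivative_mul, Polynomial.derivative_C, Polynomial.derivative_pow,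
          Polynomial.derivative_sub, Polynomial.derivative_X, Polynomial.derivative_C]
        simp only [Polynomial.eval_mul, Polynomial.eval_add, Polynomial.eval_pow,
          Polynomial.eval_sub, Polynomial.eval_X, Polynomial.eval_C, Nat.cast_ofNat,
          Polynomial.eval_ofNat, Polynomial.eval_zero, Polynomial.eval_one, zero_mul, mul_zero,
          zero_add, sub_zero, mul_one]
        ring
      rw [← h2, h1]
      apply Finset.sum_congr rfl
      intro i _
      rw [hw, hc]
      ring
    rw [hsum, hD', hx']
    ring
  -- transfer to a polynomial identity via analytic continuation
  set L : MvPolynomial (Fin n) ℝ :=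
    C (3*D) + ∑ i, C (c i) * (X i - C (p i)) with hL
  have hevalL : ∀ x : Fin n → ℝ, eval x L = 3*D + ∑ i, c i * (x i - p i) := by
    intro x
    rw [hL]
    simp [eval_sum]
  set Q : MvPolynomial (Fin n) ℝ := C (27*D^2) * f - L^3 with hQdef
  have hQzero : ∀ x : Fin n → ℝ, x ∈ {y : Fin n → ℝ | 0 < eval y f} → eval x Q = 0 := by
    intro x hx
    rw [hQdef]
    simp only [map_sub, map_mul, map_pow, eval_C]
    rw [hevalL, ← hkey x hx]
    ring
  have hopen : IsOpen {y : Fin n → ℝ | 0 < eval y f} :=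
    isOpen_lt continuous_const (mv_eval_continuous f)
  have hQall : ∀ x : Fin n → ℝ, eval x Q = 0 := by
    have hanal : AnalyticOnNhd ℝ (fun x : Fin n → ℝ => eval x Q) Set.univ := mv_eval_analytic Q
    have hpre : IsPreconnected (Set.univ : Set (Fin n → ℝ)) := isPreconnected_univ
    have hev : (fun x : Fin n → ℝ => eval x Q) =ᶠ[nhds q] 0 :=
      Filter.eventuallyEq_of_mem (hopen.mem_nhds hQ) hQzero
    have := hanal.eqOn_zero_of_preconnected_of_eventuallyEq_zero hpre (Set.mem_univ q) hev
    intro x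
    exact this (Set.mem_univ x)
  have heq : C (27*D^2) * f = L^3 := by
    have : Q = 0 := MvPolynomial.funext fun x => by rw [hQall x, map_zero]
    rw [hQdef] at this
    exact sub_eq_zero.mp this
  -- derive a contradiction with irreducibility
  have hDne : D ≠ 0 := ne_of_lt hD
  have hk : (27*D^2 : ℝ) ≠ 0 := by positivity
  have hCk : IsUnit (C ((27*D^2)⁻¹) : MvPolynomial (Fin n) ℝ) :=
    (isUnit_iff_ne_zero.mpr (inv_ne_zero hk)).map (C : ℝ →+* MvPolynomial (Fin n) ℝ)
  have hf_eq : f = (C ((27*D^2)⁻¹) * L^2) * L := by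
    have h1 : C ((27*D^2)⁻¹) * (C (27*D^2) * f) = C ((27*D^2)⁻¹) * L^3 := by rw [heq]
    rw [← mul_assoc, ← map_mul, inv_mul_cancel₀ hk, map_one, one_mul] at h1
    rw [h1]; ring
  have hLu : IsUnit L := by
    rcases hirr.isUnit_or_isUnit hf_eq with hu | hu
    · have hL2 : IsUnit (L^2) := isUnit_of_dvd_unit (dvd_mul_left _ _) hu
      exact isUnit_of_dvd_unit (dvd_pow_self L two_ne_zero) hL2
    · exact hu
  exact hirr.not_isUnit (hf_eq ▸ ((hCk.mul (hLu.pow 2)).mul hLu))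
end

section
/- If f₃ is a homogeneous cubic polynomial on ℝⁿ and there exist a nonzero constant c and a homogeneous polynomial p₉ of degree 9 with c·|∇f₃|⁶ = p₉·f₃, then f₃ = a·l³ for some linear form l and constant a. -/
open MvPolynomial

/-- Squared norm of the gradient of a polynomial. -/
noncomputable def gradSq {n : ℕ} (f : MvPolynomial (Fin n) ℝ) : MvPolynomial (Fin n) ℝ :=
  ∑ i, (pderiv i f) ^ 2

namespace Stmt5Aux


lemma eval_smul_of_isHomogeneous {n m : ℕ} (f : MvPolynomial (Fin n) ℝ)
    (hf : f.IsHomogeneous m) (t : ℝ) (v : Fin n → ℝ) :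
    eval (t • v) f = t ^ m * eval v f := by
  conv_lhs => rw [f.as_sum]
  conv_rhs => rw [f.as_sum]
  rw [map_sum, map_sum, Finset.mul_sum]
  refine Finset.sum_congr rfl fun d hd => ?_
  have hdeg : (∑ i ∈ d.support, d i) = m := by
    by_contra h
    exact (mem_support_iff.1 hd) (hf.coeff_eq_zero h)
  rw [eval_monomial, eval_monomial, Finsupp.prod, Finsupp.prod]
  calc coeff d f * ∏ i ∈ d.support, (t • v) i ^ d i
      = coeff d f * ∏ i ∈ d.support, (t ^ d i * v i ^ d i) := by
        refine congrArg _ (Finset.prod_congr rfl fun i _ => ?_)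
        simp [mul_pow]
    _ = coeff d f * ((∏ i ∈ d.support, t ^ d i) * ∏ i ∈ d.support, v i ^ d i) := by
        rw [Finset.prod_mul_distrib]
    _ = t ^ m * (coeff d f * ∏ i ∈ d.support, v i ^ d i) := by
        rw [Finset.prod_pow_eq_pow_sum, hdeg]; ring

lemma isHomogeneous_pderiv {n m : ℕ} {f : MvPolynomial (Fin n) ℝ}
    (hf : f.IsHomogeneous (m + 1)) (i : Fin n) : (pderiv i f).IsHomogeneous m := by
  conv_lhs => rw [f.as_sum]
  rw [map_sum]
  apply IsHomogeneous.sum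
  intro d hd
  rw [pderiv_monomial]
  by_cases hdi : d i = 0
  · rw [hdi]
    norm_num
    exact isHomogeneous_zero _ _ _
  · apply isHomogeneous_monomial
    have hdeg : d.degree = m + 1 := by
      by_contra h
      exact (mem_support_iff.1 hd) (hf.coeff_eq_zero h)
    have h1 : (d - Finsupp.single i 1) + Finsupp.single i 1 = d := by
      ext j
      by_cases hji : j = i
      · subst hji
        simp [Nat.sub_add_cancel (Nat.one_le_iff_ne_zero.2 hdi)]
      · simp [Finsupp.single_apply, Ne.symm hji, hji]
    have h2 := congrArg Finsupp.degree h1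
    rw [Finsupp.degree_eq_weight_one, map_add, ← Finsupp.degree_eq_weight_one] at h2
    have h3 : Finsupp.degree (Finsupp.single i 1) = 1 := by
      simp [Finsupp.degree_single]
    rw [h3, hdeg] at h2
    omega

lemma eq_C_of_isHomogeneous_zero {n : ℕ} {f : MvPolynomial (Fin n) ℝ}
    (hf : f.IsHomogeneous 0) : f = C (coeff 0 f) := by
  ext d
  by_cases hd : d = 0
  · subst hd; simp
  · rw [coeff_C, if_neg (Ne.symm hd)]
    apply hf.coeff_eq_zero
    simpa [Finsupp.degree_eq_zero_iff] using hd


/-- Directional derivative operator. -/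
noncomputable def dirD {n : ℕ} (v : Fin n → ℝ) (g : MvPolynomial (Fin n) ℝ) :
    MvPolynomial (Fin n) ℝ :=
  ∑ i, C (v i) * pderiv i g

/-- Substitution `xᵢ ↦ xᵢ + vᵢ · T`. -/
noncomputable def subT {n : ℕ} (v : Fin n → ℝ) :
    MvPolynomial (Fin n) ℝ →ₐ[ℝ] Polynomial (MvPolynomial (Fin n) ℝ) :=
  aeval (fun i => Polynomial.C (X i) + Polynomial.C (C (v i)) * Polynomial.X)

lemma dirD_add {n : ℕ} (v : Fin n → ℝ) (p q : MvPolynomial (Fin n) ℝ) :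
    dirD v (p + q) = dirD v p + dirD v q := by
  simp [dirD, map_add, mul_add, Finset.sum_add_distrib]

lemma dirD_C {n : ℕ} (v : Fin n → ℝ) (r : ℝ) : dirD v (C r) = 0 := by
  simp [dirD, pderiv_C]

lemma dirD_zero {n : ℕ} (v : Fin n → ℝ) : dirD v 0 = 0 := by
  simp [dirD]

lemma dirD_mul_X {n : ℕ} (v : Fin n → ℝ) (p : MvPolynomial (Fin n) ℝ) (i : Fin n) :
    dirD v (p * X i) = dirD v p * X i + C (v i) * p := by
  have h2 : ∀ j : Fin n, C (v j) * (pderiv j p * X i + p * pderiv j (X i))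
      = (C (v j) * pderiv j p) * X i + (if j = i then C (v i) * p else 0) := by
    intro j
    by_cases hji : j = i
    · subst hji
      rw [pderiv_X_self, if_pos rfl]
      ring
    · rw [pderiv_X_of_ne (Ne.symm hji), if_neg hji]
      ring
  simp only [dirD, pderiv_mul]
  rw [Finset.sum_congr rfl (fun j _ => h2 j), Finset.sum_add_distrib, ← Finset.sum_mul,
    Finset.sum_ite_eq' Finset.univ i (fun _ => C (v i) * p)]
  simp

lemma isHomogeneous_dirD {n m : ℕ} (v : Fin n → ℝ) {f : MvPolynomial (Fin n) ℝ}
    (hf : f.IsHomogeneous (m + 1)) : (dirD v f).IsHomogeneous m := by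
  apply IsHomogeneous.sum
  intro i _
  exact (isHomogeneous_pderiv hf i).C_mul _

lemma subT_X {n : ℕ} (v : Fin n → ℝ) (i : Fin n) :
    subT v (X i) = Polynomial.C (X i) + Polynomial.C (C (v i)) * Polynomial.X := by
  simp [subT]

lemma subT_C {n : ℕ} (v : Fin n → ℝ) (r : ℝ) :
    subT v (C r) = Polynomial.C (C r) := by
  simp [subT, aeval_C, Polynomial.algebraMap_apply, algebraMap_eq]

lemma derivative_subT {n : ℕ} (v : Fin n → ℝ) (g : MvPolynomial (Fin n) ℝ) :
    Polynomial.derivative (subT v g) = subT v (dirD v g) := by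
  induction g using MvPolynomial.induction_on with
  | C r => rw [subT_C, dirD_C, map_zero, Polynomial.derivative_C]
  | add p q hp hq => rw [map_add, Polynomial.derivative_add, hp, hq, dirD_add, map_add]
  | mul_X p i hp =>
      rw [map_mul, Polynomial.derivative_mul, hp, dirD_mul_X, map_add, map_mul, map_mul,
        subT_C, subT_X]
      simp only [Polynomial.derivative_add, Polynomial.derivative_C, Polynomial.derivative_mul,
        Polynomial.derivative_X, zero_add, mul_one, zero_mul]
      ring

lemma coeff_zero_subT {n : ℕ} (v : Fin n → ℝ) (g : MvPolynomial (Fin n) ℝ) :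
    (subT v g).coeff 0 = g := by
  have h : (Polynomial.constantCoeff.comp (subT v).toRingHom :
      MvPolynomial (Fin n) ℝ →+* MvPolynomial (Fin n) ℝ) = RingHom.id _ := by
    apply MvPolynomial.ringHom_ext
    · intro r
      simp [subT_C]
    · intro i
      simp [subT_X]
  simpa using RingHom.congr_fun h g

lemma coeff_subT_factorial {n : ℕ} (v : Fin n → ℝ) (g : MvPolynomial (Fin n) ℝ) (k : ℕ) :
    (subT v g).coeff k * (k.factorial : MvPolynomial (Fin n) ℝ) = (dirD v)^[k] g := by
  induction k generalizing g with
  | zero => simpa using coeff_zero_subT v g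
  | succ k ih =>
      have h1 : (subT v g).coeff (k + 1) * ((k+1 : ℕ) : MvPolynomial (Fin n) ℝ)
          = (Polynomial.derivative (subT v g)).coeff k := by
        rw [Polynomial.coeff_derivative]
        push_cast
        ring
      rw [Function.iterate_succ_apply, ← ih (dirD v g), ← derivative_subT, ← h1,
        Nat.factorial_succ]
      push_cast
      ring

lemma eval_subT {n : ℕ} (v : Fin n → ℝ) (g : MvPolynomial (Fin n) ℝ) (x : Fin n → ℝ) (t : ℝ) :
    Polynomial.eval t ((subT v g).map (eval x)) = eval (x + t • v) g := by
  have h : ((Polynomial.evalRingHom t).comp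
      ((Polynomial.mapRingHom (eval x : MvPolynomial (Fin n) ℝ →+* ℝ)).comp
        (subT v).toRingHom)) = (eval (x + t • v) : MvPolynomial (Fin n) ℝ →+* ℝ) := by
    apply MvPolynomial.ringHom_ext
    · intro r
      simp [subT_C]
    · intro i
      simp [subT_X]
      ring
  exact RingHom.congr_fun h g



section OneVar



open Polynomial

lemma exists_root_aux (P : Polynomial ℝ) (hnd : P.natDegree = 3) (hlc : 0 ≤ P.leadingCoeff) :
    ∃ r : ℝ, P.IsRoot r := by
  have hdeg : 0 < P.degree := natDegree_pos_iff_degree_pos.1 (by omega)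
  have h1 : Filter.Tendsto (fun t => P.eval t) Filter.atTop Filter.atTop :=
    P.tendsto_atTop_of_leadingCoeff_nonneg hdeg hlc
  obtain ⟨b, hb⟩ := (h1.eventually_ge_atTop 0).exists
  set Q : Polynomial ℝ := P.comp (-Polynomial.X) with hQ
  have hndX : (-Polynomial.X : Polynomial ℝ).natDegree = 1 := by simp
  have hQdeg : Q.natDegree = 3 := by rw [hQ, natDegree_comp, hndX, hnd, mul_one]
  have hQlc : Q.leadingCoeff ≤ 0 := by
    rw [hQ, leadingCoeff_comp (by rw [hndX]; norm_num)]
    have : (-Polynomial.X : Polynomial ℝ).leadingCoeff = -1 := by simp [leadingCoeff_neg]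
    rw [this, hnd]
    norm_num
    nlinarith [hlc]
  have h2 : Filter.Tendsto (fun t => Q.eval t) Filter.atTop Filter.atBot :=
    Q.tendsto_atBot_of_leadingCoeff_nonpos (natDegree_pos_iff_degree_pos.1 (by omega)) hQlc
  obtain ⟨a, ha⟩ := (h2.eventually_le_atBot 0).exists
  have ha' : P.eval (-a) ≤ 0 := by simpa [hQ, eval_comp] using ha
  have hcont : Continuous fun t : ℝ => P.eval t := P.continuous_aeval
  have : (0 : ℝ) ∈ Set.Icc (P.eval (-a)) (P.eval b) := ⟨ha', hb⟩
  obtain ⟨r, hr⟩ := intermediate_value_univ (-a) b hcont this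
  exact ⟨r, hr⟩

lemma exists_root_cubic (P : Polynomial ℝ) (hnd : P.natDegree = 3) :
    ∃ r : ℝ, P.IsRoot r := by
  rcases le_total 0 P.leadingCoeff with h | h
  · exact exists_root_aux P hnd h
  · obtain ⟨r, hr⟩ := exists_root_aux (-P) (by simpa using hnd)
      (by rw [leadingCoeff_neg]; linarith)
    exact ⟨r, by simpa [IsRoot] using hr⟩

lemma cubic_coeff_identity (P : Polynomial ℝ) (hd : P.natDegree ≤ 3) (h3 : P.coeff 3 ≠ 0)
    (hroot : ∀ t : ℝ, P.eval t = 0 → P.derivative.eval t = 0) :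
    (P.coeff 2) ^ 3 = 27 * (P.coeff 3) ^ 2 * P.coeff 0 := by
  have hP : P ≠ 0 := fun h => h3 (by simp [h])
  have hnd : P.natDegree = 3 := le_antisymm hd (le_natDegree_of_ne_zero h3)
  obtain ⟨r, hr⟩ := exists_root_cubic P hnd
  have hmult : ∀ s : ℝ, P.IsRoot s → 1 < P.rootMultiplicity s := by
    intro s hs
    exact (one_lt_rootMultiplicity_iff_isRoot hP).2 ⟨hs, hroot s hs⟩
  obtain ⟨g, hPg, hgnd⟩ := P.exists_eq_pow_rootMultiplicity_mul_and_not_dvd hP r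
  set m := P.rootMultiplicity r with hm
  have hg0 : g ≠ 0 := by
    intro h; rw [h, mul_zero] at hPg; exact hP hPg
  have hsum : m + g.natDegree = 3 := by
    rw [← hnd, hPg, natDegree_mul (pow_ne_zero _ (X_sub_C_ne_zero r)) hg0,
      natDegree_pow, natDegree_X_sub_C, mul_one]
  have hm2 : 1 < m := hmult r hr
  have hcase : m = 2 ∨ m = 3 := by omega
  rcases hcase with hmc | hmc <;> rw [hmc] at hPg hsum
  · -- m = 2 : g has degree 1, so another root, contradiction
    exfalso
    have hgdeg : g.natDegree = 1 := by omega
    obtain ⟨u, w, hu, hg⟩ : ∃ u w : ℝ, u ≠ 0 ∧ g = Polynomial.C u * Polynomial.X + Polynomial.C w := by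
      refine ⟨g.coeff 1, g.coeff 0, ?_, eq_X_add_C_of_natDegree_le_one (by omega)⟩
      intro h0
      have hlcg : g.leadingCoeff = 0 := by rw [leadingCoeff, hgdeg]; exact h0
      exact hg0 (leadingCoeff_eq_zero.1 hlcg)
    set s := -w / u with hs
    have hgs : g.eval s = 0 := by
      rw [hg]
      simp [hs]
      field_simp
      ring
    have hsr : s ≠ r := by
      intro h
      apply hgnd
      rw [dvd_iff_isRoot]
      rwa [h] at hgs
    have hPs : P.IsRoot s := by
      rw [IsRoot, hPg]
      simp [hgs]
    have h1 : 1 < P.rootMultiplicity s := hmult s hPs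
    have h2 : P.rootMultiplicity s = rootMultiplicity s ((Polynomial.X - Polynomial.C r) ^ 2) + rootMultiplicity s g := by
      rw [hPg] at hP ⊢
      exact rootMultiplicity_mul hP
    have h3' : rootMultiplicity s ((Polynomial.X - Polynomial.C r) ^ 2 : Polynomial ℝ) = 0 := by
      apply rootMultiplicity_eq_zero
      simp [IsRoot, sub_eq_zero, hsr]
    have h4 : rootMultiplicity s g ≤ 1 := by
      have hdvd : (Polynomial.X - Polynomial.C s) ^ rootMultiplicity s g ∣ g := g.pow_rootMultiplicity_dvd s
      have := natDegree_le_of_dvd hdvd hg0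
      rwa [natDegree_pow, natDegree_X_sub_C, mul_one, hgdeg] at this
    omega
  · -- m = 3 : P = C b * (X - C r)^3
    have hgdeg : g.natDegree = 0 := by omega
    obtain ⟨b, hb⟩ : ∃ b : ℝ, g = Polynomial.C b := ⟨g.coeff 0, eq_C_of_natDegree_eq_zero hgdeg⟩
    have hPe : P = Polynomial.C b * Polynomial.X ^ 3 + Polynomial.C (-3 * r * b) * Polynomial.X ^ 2 + Polynomial.C (3 * r ^ 2 * b) * Polynomial.X + Polynomial.C (-r ^ 3 * b) := by
      rw [hPg, hb]
      simp only [map_mul, map_neg, map_pow, map_ofNat]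
      ring
    have e3 : P.coeff 3 = b := by
      rw [hPe]; simp only [Polynomial.coeff_add, Polynomial.coeff_C_mul, Polynomial.coeff_X_pow, Polynomial.coeff_X, Polynomial.coeff_C]; norm_num
    have e2 : P.coeff 2 = -3 * r * b := by
      rw [hPe]; simp only [Polynomial.coeff_add, Polynomial.coeff_C_mul, Polynomial.coeff_X_pow, Polynomial.coeff_X, Polynomial.coeff_C]; norm_num
    have e0 : P.coeff 0 = -r ^ 3 * b := by
      rw [hPe]; simp only [Polynomial.coeff_add, Polynomial.coeff_C_mul, Polynomial.coeff_X_pow, Polynomial.coeff_X, Polynomial.coeff_C]; norm_num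
    rw [e3, e2, e0]
    ring



end OneVar

end Stmt5Aux

open Stmt5Aux in
theorem stmt_5 (n : ℕ) (f₃ p₉ : MvPolynomial (Fin n) ℝ)
    (h3 : f₃.IsHomogeneous 3) (h9 : p₉.IsHomogeneous 9)
    (c : ℝ) (hc : c ≠ 0)
    (heq : C c * (gradSq f₃) ^ 3 = p₉ * f₃) :
    ∃ (a : ℝ) (l : MvPolynomial (Fin n) ℝ), l.IsHomogeneous 1 ∧ f₃ = C a * l ^ 3 := by
  classical
  by_cases hf0 : f₃ = 0
  · exact ⟨0, 0, isHomogeneous_zero _ _ _, by simp [hf0]⟩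
  obtain ⟨v₀, hv₀⟩ : ∃ v : Fin n → ℝ, eval v f₃ ≠ 0 := by
    by_contra h
    push_neg at h
    exact hf0 (MvPolynomial.funext (fun x => by simp [h x]))
  set a₃ := eval v₀ f₃ with ha₃
  -- every real zero of f₃ is a critical point
  have hcrit : ∀ y : Fin n → ℝ, eval y f₃ = 0 → ∀ i, eval y (pderiv i f₃) = 0 := by
    intro y hy i
    have h1 := congrArg (eval y) heq
    rw [map_mul, map_mul, hy, mul_zero, map_pow, eval_C] at h1
    have hG : eval y (gradSq f₃) = 0 := by
      rcases mul_eq_zero.1 h1 with h | h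
      · exact absurd h hc
      · exact pow_eq_zero_iff (by norm_num) |>.1 h
    have hsum : ∑ j : Fin n, (eval y (pderiv j f₃)) ^ 2 = 0 := by
      rw [← hG, gradSq, map_sum]
      exact Finset.sum_congr rfl fun j _ => by rw [map_pow]
    have hterm := (Finset.sum_eq_zero_iff_of_nonneg
      (fun j _ => sq_nonneg (eval y (pderiv j f₃)))).1 hsum i (Finset.mem_univ i)
    exact pow_eq_zero_iff (by norm_num) |>.1 hterm
  set F := subT v₀ f₃ with hF
  have hfact : ∀ k, F.coeff k * (k.factorial : MvPolynomial (Fin n) ℝ) = (dirD v₀)^[k] f₃ :=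
    fun k => coeff_subT_factorial v₀ f₃ k
  -- homogeneity chain of directional derivatives
  set g1 := dirD v₀ f₃ with hg1
  set g2 := dirD v₀ g1 with hg2
  set g3 := dirD v₀ g2 with hg3
  have h3' : f₃.IsHomogeneous (2 + 1) := by norm_num; exact h3
  have hg1hom : g1.IsHomogeneous 2 := isHomogeneous_dirD v₀ h3'
  have hg2hom : g2.IsHomogeneous 1 := isHomogeneous_dirD v₀ (by norm_num; exact hg1hom)
  have hg3hom : g3.IsHomogeneous 0 := isHomogeneous_dirD v₀ (by norm_num; exact hg2hom)
  set κ := coeff 0 g3 with hκdef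
  have hg3C : g3 = C κ := eq_C_of_isHomogeneous_zero hg3hom
  have hit2 : (dirD v₀)^[2] f₃ = g2 := by
    rw [show (2:ℕ) = 1+1 from rfl, Function.iterate_succ_apply', Function.iterate_one]
  have hit3 : (dirD v₀)^[3] f₃ = g3 := by
    rw [show (3:ℕ) = 2+1 from rfl, Function.iterate_succ_apply', hit2]
  -- the second coefficient is our linear form
  set l := F.coeff 2 with hl
  have hl2 : l * C (2:ℝ) = g2 := by
    have h := hfact 2
    rw [hit2] at h
    have h2c : ((Nat.factorial 2 : ℕ) : MvPolynomial (Fin n) ℝ) = C (2:ℝ) := by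
      rw [show Nat.factorial 2 = 2 from rfl]
      rw [show ((2:ℕ) : MvPolynomial (Fin n) ℝ) = C ((2:ℕ):ℝ) from (map_natCast C 2).symm]
      norm_num
    rw [← h, h2c]
  have hlC : l = C (1/2 : ℝ) * g2 := by
    rw [← hl2]
    have : C (1/2 : ℝ) * C (2:ℝ) = (1 : MvPolynomial (Fin n) ℝ) := by
      rw [← C_mul]; norm_num
    calc l = l * (C (1/2:ℝ) * C (2:ℝ)) := by rw [this, mul_one]
      _ = C (1/2:ℝ) * (l * C 2) := by ring
  have hlhom : l.IsHomogeneous 1 := by rw [hlC]; exact hg2hom.C_mul _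
  -- the third coefficient is constant
  have hc3 : F.coeff 3 = C (κ / 6) := by
    have h := hfact 3
    rw [hit3, hg3C] at h
    have h6 : ((Nat.factorial 3 : ℕ) : MvPolynomial (Fin n) ℝ) = C (6:ℝ) := by
      rw [show Nat.factorial 3 = 6 from rfl]
      rw [show ((6:ℕ) : MvPolynomial (Fin n) ℝ) = C ((6:ℕ):ℝ) from (map_natCast C 6).symm]
      norm_num
    rw [h6] at h
    have h6ne : (C (6:ℝ) : MvPolynomial (Fin n) ℝ) ≠ 0 := by
      simp [MvPolynomial.C_eq_zero]
    apply mul_right_cancel₀ h6ne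
    rw [h, ← C_mul]
    norm_num
  -- coefficients of index ≥ 4 vanish
  have hk4 : ∀ k, 4 ≤ k → F.coeff k = 0 := by
    intro k hk
    have hiter4 : (dirD v₀)^[4] f₃ = 0 := by
      rw [show (4:ℕ) = 3+1 from rfl, Function.iterate_succ_apply', hit3, hg3C, dirD_C]
    have hkiter : (dirD v₀)^[k] f₃ = 0 := by
      obtain ⟨j, rfl⟩ : ∃ j, k = j + 4 := ⟨k - 4, by omega⟩
      rw [Function.iterate_add_apply, hiter4, Function.iterate_fixed (dirD_zero v₀)]
    have h := hfact k
    rw [hkiter] at h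
    have hfne : ((k.factorial : ℕ) : MvPolynomial (Fin n) ℝ) ≠ 0 :=
      Nat.cast_ne_zero.2 (Nat.factorial_ne_zero k)
    exact (mul_eq_zero.1 h).resolve_right hfne
  -- identify the leading coefficient via scaling
  have hκ : κ / 6 = a₃ := by
    set A := F.map (eval (0 : Fin n → ℝ)) with hA
    have hAe : ∀ t : ℝ, A.eval t = a₃ * t ^ 3 := by
      intro t
      rw [hA, hF, eval_subT]
      have h0 : (0 : Fin n → ℝ) + t • v₀ = t • v₀ := by simp
      rw [h0, eval_smul_of_isHomogeneous f₃ h3 t v₀]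
      ring
    have hAeq : A = Polynomial.C a₃ * Polynomial.X ^ 3 := by
      apply Polynomial.funext
      intro t
      rw [hAe t]
      simp
    have h1 : A.coeff 3 = a₃ := by
      rw [hAeq]
      simp
    rw [hA, Polynomial.coeff_map, hc3, eval_C] at h1
    exact h1
  have hc3' : F.coeff 3 = C a₃ := by rw [hc3, hκ]
  -- the pointwise cubic identity
  have key : ∀ x : Fin n → ℝ, (eval x l) ^ 3 = 27 * a₃ ^ 2 * eval x f₃ := by
    intro x
    set P := F.map (eval x) with hP
    have hPk : ∀ k, P.coeff k = eval x (F.coeff k) := fun k => Polynomial.coeff_map _ _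
    have hd : P.natDegree ≤ 3 := Polynomial.natDegree_le_iff_coeff_eq_zero.2 (fun N hN => by
      rw [hPk, hk4 N (by omega), map_zero])
    have hP3 : P.coeff 3 = a₃ := by rw [hPk, hc3', eval_C]
    have hroot : ∀ t : ℝ, P.eval t = 0 → P.derivative.eval t = 0 := by
      intro t ht
      have hy : eval (x + t • v₀) f₃ = 0 := by
        rw [← eval_subT v₀ f₃ x t]
        exact ht
      have hd' : P.derivative = (subT v₀ (dirD v₀ f₃)).map (eval x) := by
        rw [hP, Polynomial.derivative_map, derivative_subT]
      rw [hd', eval_subT]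
      simp only [dirD, map_sum, map_mul, eval_C]
      refine Finset.sum_eq_zero fun i _ => ?_
      rw [hcrit _ hy i, mul_zero]
    have hkey := cubic_coeff_identity P hd (by rw [hP3]; exact hv₀) hroot
    rw [hP3, hPk 2, hPk 0] at hkey
    rw [hF, coeff_zero_subT] at hkey
    exact hkey
  have hgl : l ^ 3 = C (27 * a₃ ^ 2) * f₃ := by
    apply MvPolynomial.funext
    intro x
    rw [map_pow, map_mul, eval_C]
    exact key x
  refine ⟨(27 * a₃ ^ 2)⁻¹, l, hlhom, ?_⟩
  have hne : 27 * a₃ ^ 2 ≠ 0 := mul_ne_zero (by norm_num) (pow_ne_zero _ hv₀)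
  rw [hgl, ← mul_assoc, ← C_mul, inv_mul_cancel₀ hne, C_1, one_mul]
end

section
/- Let f(x,y) = x³ + yᵗAy + k₀x² + (yᵗr)x + k₁x + yᵗs as above. Then the polynomial Δ₁f := 2|∇f|²Δf − ∇fᵗ∇|∇f|² satisfies Δ₁f − 4(tr A)|∇f|² ∈ Pol₃, i.e., it is a polynomial of total degree at most 3. -/
open MvPolynomial

/-- Laplacian of a polynomial. -/
noncomputable def lap {n : ℕ} (f : MvPolynomial (Fin n) ℝ) : MvPolynomial (Fin n) ℝ :=
  ∑ i, pderiv i (pderiv i f)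

/-- Δ₁ f = 2|∇f|²Δf − ∇fᵗ∇|∇f|². -/
noncomputable def delta1 {n : ℕ} (f : MvPolynomial (Fin n) ℝ) : MvPolynomial (Fin n) ℝ :=
  2 * gradSq f * lap f - ∑ i, pderiv i f * pderiv i (gradSq f)

/-- The cubic f(x,y) = x³ + yᵗAy + k₀x² + (yᵗr)x + k₁x + yᵗs, with x = X 0
and y = (X 1, …, X m) in `MvPolynomial (Fin (m+1)) ℝ`. -/
noncomputable def fcmc (m : ℕ) (A : Matrix (Fin m) (Fin m) ℝ) (r s : Fin m → ℝ)
    (k₀ k₁ : ℝ) : MvPolynomial (Fin (m + 1)) ℝ :=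
  X 0 ^ 3 + (∑ i, ∑ j, C (A i j) * X i.succ * X j.succ) + C k₀ * X 0 ^ 2
    + (∑ i, C (r i) * X i.succ) * X 0 + C k₁ * X 0 + ∑ i, C (s i) * X i.succ

noncomputable def Gp (m : ℕ) (r : Fin m → ℝ) (k₀ k₁ : ℝ) : MvPolynomial (Fin (m + 1)) ℝ :=
  C 3 * X 0 ^ 2 + C (2*k₀) * X 0 + (∑ i, C (r i) * X i.succ) + C k₁

noncomputable def Hp (m : ℕ) (A : Matrix (Fin m) (Fin m) ℝ) (r s : Fin m → ℝ) (j : Fin m) :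
    MvPolynomial (Fin (m + 1)) ℝ :=
  (∑ i, C (A j i + A i j) * X i.succ) + C (r j) * X 0 + C (s j)

noncomputable def Lp (m : ℕ) (k₀ : ℝ) : MvPolynomial (Fin (m + 1)) ℝ :=
  C 6 * X 0 + C (2*k₀)

lemma pd0_fcmc (m : ℕ) (A : Matrix (Fin m) (Fin m) ℝ) (r s : Fin m → ℝ) (k₀ k₁ : ℝ) :
    pderiv 0 (fcmc m A r s k₀ k₁) = Gp m r k₀ k₁ := by
  simp [fcmc, Gp, pderiv_pow, Fin.succ_ne_zero, (Fin.succ_ne_zero _).symm, map_ofNat, map_mul]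
  ring

lemma pds_fcmc (m : ℕ) (A : Matrix (Fin m) (Fin m) ℝ) (r s : Fin m → ℝ) (k₀ k₁ : ℝ) (j : Fin m) :
    pderiv j.succ (fcmc m A r s k₀ k₁) = Hp m A r s j := by
  simp only [fcmc, Hp, map_add, pderiv_mul, pderiv_C, pderiv_pow, pderiv_X, map_sum,
    Pi.single_eq_of_ne (Fin.succ_ne_zero j), Fin.succ_inj, zero_mul, mul_zero, add_zero,
    zero_add, mul_one, Pi.single_apply, Fin.succ_inj]
  have h0 : (0 : Fin (m+1)) = j.succ ↔ False := by simp [(Fin.succ_ne_zero j).symm]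
  simp [h0, mul_ite, ite_mul, Finset.sum_add_distrib, Finset.sum_ite_eq, Finset.sum_ite_eq', add_mul]

lemma pd0_G (m : ℕ) (r : Fin m → ℝ) (k₀ k₁ : ℝ) :
    pderiv 0 (Gp m r k₀ k₁) = Lp m k₀ := by
  have h2 : (pderiv (0 : Fin (m+1))) (2 : MvPolynomial (Fin (m+1)) ℝ) = 0 := by
    rw [← map_ofNat (C : ℝ →+* MvPolynomial (Fin (m+1)) ℝ) 2, pderiv_C]
  have h3 : (pderiv (0 : Fin (m+1))) (3 : MvPolynomial (Fin (m+1)) ℝ) = 0 := by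
    rw [← map_ofNat (C : ℝ →+* MvPolynomial (Fin (m+1)) ℝ) 3, pderiv_C]
  simp [Gp, Lp, pderiv_pow, Fin.succ_ne_zero, (Fin.succ_ne_zero _).symm, map_ofNat, map_mul, h2, h3]
  ring

lemma pds_G (m : ℕ) (r : Fin m → ℝ) (k₀ k₁ : ℝ) (j : Fin m) :
    pderiv j.succ (Gp m r k₀ k₁) = C (r j) := by
  have h0 : (0 : Fin (m+1)) = j.succ ↔ False := by simp [(Fin.succ_ne_zero j).symm]
  simp [Gp, pderiv_pow, h0, Pi.single_apply, Fin.succ_inj, mul_ite, ite_mul,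
    Finset.sum_ite_eq']

lemma pd0_H (m : ℕ) (A : Matrix (Fin m) (Fin m) ℝ) (r s : Fin m → ℝ) (j : Fin m) :
    pderiv 0 (Hp m A r s j) = C (r j) := by
  simp [Hp, Fin.succ_ne_zero, (Fin.succ_ne_zero _).symm]

lemma pds_H (m : ℕ) (A : Matrix (Fin m) (Fin m) ℝ) (r s : Fin m → ℝ) (j i : Fin m) :
    pderiv i.succ (Hp m A r s j) = C (A j i + A i j) := by
  have h0 : (0 : Fin (m+1)) = i.succ ↔ False := by simp [(Fin.succ_ne_zero i).symm]
  simp [Hp, h0, Pi.single_apply, Fin.succ_inj, mul_ite, ite_mul, Finset.sum_ite_eq']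

lemma gradSq_fcmc (m : ℕ) (A : Matrix (Fin m) (Fin m) ℝ) (r s : Fin m → ℝ) (k₀ k₁ : ℝ) :
    gradSq (fcmc m A r s k₀ k₁) = (Gp m r k₀ k₁) ^ 2 + ∑ j, (Hp m A r s j) ^ 2 := by
  rw [gradSq, Fin.sum_univ_succ, pd0_fcmc]
  simp only [pds_fcmc]

lemma lap_fcmc (m : ℕ) (A : Matrix (Fin m) (Fin m) ℝ) (r s : Fin m → ℝ) (k₀ k₁ : ℝ) :
    lap (fcmc m A r s k₀ k₁) = Lp m k₀ + C (2 * A.trace) := by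
  rw [lap, Fin.sum_univ_succ, pd0_fcmc, pd0_G]
  simp only [pds_fcmc, pds_H]
  rw [← map_sum]
  congr 1
  simp [Matrix.trace, Matrix.diag, Finset.mul_sum, two_mul, Finset.sum_add_distrib]

lemma pd0_gradSq (m : ℕ) (A : Matrix (Fin m) (Fin m) ℝ) (r s : Fin m → ℝ) (k₀ k₁ : ℝ) :
    pderiv 0 (gradSq (fcmc m A r s k₀ k₁))
      = 2 * Gp m r k₀ k₁ * Lp m k₀ + 2 * ∑ j, C (r j) * Hp m A r s j := by
  rw [gradSq_fcmc]
  simp only [map_add, map_sum, pow_two, pderiv_mul, pd0_G, pd0_H]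
  rw [Finset.mul_sum]
  congr 1
  · ring
  · exact Finset.sum_congr rfl fun j _ => by ring

lemma pds_gradSq (m : ℕ) (A : Matrix (Fin m) (Fin m) ℝ) (r s : Fin m → ℝ) (k₀ k₁ : ℝ) (j : Fin m) :
    pderiv j.succ (gradSq (fcmc m A r s k₀ k₁))
      = 2 * Gp m r k₀ k₁ * C (r j) + 2 * ∑ i, Hp m A r s i * C (A i j + A j i) := by
  rw [gradSq_fcmc]
  simp only [map_add, map_sum, pow_two, pderiv_mul, pds_G, pds_H]
  rw [Finset.mul_sum]
  congr 1
  · ring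
  · exact Finset.sum_congr rfl fun i _ => by ring

lemma key (m : ℕ) (A : Matrix (Fin m) (Fin m) ℝ) (r s : Fin m → ℝ) (k₀ k₁ : ℝ) :
    delta1 (fcmc m A r s k₀ k₁) - C (4 * A.trace) * gradSq (fcmc m A r s k₀ k₁)
      = 2 * (∑ j, (Hp m A r s j) ^ 2) * Lp m k₀
        - 4 * Gp m r k₀ k₁ * (∑ j, C (r j) * Hp m A r s j)
        - 2 * ∑ j, ∑ i, Hp m A r s j * Hp m A r s i * C (A i j + A j i) := by
  rw [delta1, Fin.sum_univ_succ, pd0_fcmc, pd0_gradSq, lap_fcmc]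
  simp only [pds_fcmc, pds_gradSq]
  rw [gradSq_fcmc]
  have e2 : ∀ j : Fin m, Hp m A r s j *
      (2 * Gp m r k₀ k₁ * C (r j) + 2 * ∑ i, Hp m A r s i * C (A i j + A j i))
      = 2 * Gp m r k₀ k₁ * (C (r j) * Hp m A r s j)
        + 2 * ∑ i, Hp m A r s j * Hp m A r s i * C (A i j + A j i) := fun j => by
    rw [Finset.mul_sum, Finset.mul_sum]
    rw [mul_add]
    congr 1
    · ring
    · rw [Finset.mul_sum]
      exact Finset.sum_congr rfl fun i _ => by ring
  simp only [e2]
  rw [Finset.sum_add_distrib, ← Finset.mul_sum, ← Finset.mul_sum]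
  have hc2 : (C (2 * A.trace) : MvPolynomial (Fin (m+1)) ℝ) = 2 * C A.trace := by
    rw [map_mul, map_ofNat]
  have hc4 : (C (4 * A.trace) : MvPolynomial (Fin (m+1)) ℝ) = 4 * C A.trace := by
    rw [map_mul, map_ofNat]
  rw [hc2, hc4]
  ring

lemma deg_two : ((2 : MvPolynomial (Fin (m+1)) ℝ)).totalDegree = 0 := by
  rw [← map_ofNat (C : ℝ →+* MvPolynomial (Fin (m+1)) ℝ) 2, totalDegree_C]

lemma deg_four : ((4 : MvPolynomial (Fin (m+1)) ℝ)).totalDegree = 0 := by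
  rw [← map_ofNat (C : ℝ →+* MvPolynomial (Fin (m+1)) ℝ) 4, totalDegree_C]

lemma deg_H (m : ℕ) (A : Matrix (Fin m) (Fin m) ℝ) (r s : Fin m → ℝ) (j : Fin m) :
    (Hp m A r s j).totalDegree ≤ 1 := by
  refine (totalDegree_add _ _).trans (max_le ((totalDegree_add _ _).trans (max_le ?_ ?_)) ?_)
  · refine (totalDegree_finset_sum _ _).trans (Finset.sup_le fun i _ => ?_)
    exact (totalDegree_mul _ _).trans (by rw [totalDegree_C, totalDegree_X])
  · exact (totalDegree_mul _ _).trans (by rw [totalDegree_C, totalDegree_X])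
  · exact (totalDegree_C _).trans_le (by omega)

lemma deg_G (m : ℕ) (r : Fin m → ℝ) (k₀ k₁ : ℝ) : (Gp m r k₀ k₁).totalDegree ≤ 2 := by
  refine (totalDegree_add _ _).trans (max_le ((totalDegree_add _ _).trans (max_le
    ((totalDegree_add _ _).trans (max_le ?_ ?_)) ?_)) ?_)
  · refine (totalDegree_mul _ _).trans ?_
    have := totalDegree_pow (X 0 : MvPolynomial (Fin (m+1)) ℝ) 2
    simp only [totalDegree_C, zero_add]
    exact this.trans (by simp [totalDegree_X])
  · exact (totalDegree_mul _ _).trans (by rw [totalDegree_C, totalDegree_X]; omega)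
  · refine (totalDegree_finset_sum _ _).trans (Finset.sup_le fun i _ => ?_)
    exact ((totalDegree_mul _ _).trans (by rw [totalDegree_C, totalDegree_X]; omega)).trans one_le_two
  · exact (totalDegree_C _).trans_le (by omega)

lemma deg_L (m : ℕ) (k₀ : ℝ) : (Lp m k₀).totalDegree ≤ 1 := by
  refine (totalDegree_add _ _).trans (max_le ?_ ?_)
  · exact (totalDegree_mul _ _).trans (by rw [totalDegree_C, totalDegree_X])
  · exact (totalDegree_C _).trans_le (by omega)

theorem stmt_8 (m : ℕ) (A : Matrix (Fin m) (Fin m) ℝ) (hA : A.IsSymm)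
    (r s : Fin m → ℝ) (k₀ k₁ : ℝ) :
    (delta1 (fcmc m A r s k₀ k₁)
      - C (4 * A.trace) * gradSq (fcmc m A r s k₀ k₁)).totalDegree ≤ 3 := by
  rw [key]
  refine (totalDegree_sub _ _).trans (max_le ((totalDegree_sub _ _).trans (max_le ?_ ?_)) ?_)
  · refine (totalDegree_mul _ _).trans ?_
    have h1 : ((2 : MvPolynomial (Fin (m+1)) ℝ) * ∑ j, (Hp m A r s j) ^ 2).totalDegree ≤ 2 := by
      refine (totalDegree_mul _ _).trans ?_
      rw [deg_two, zero_add]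
      refine (totalDegree_finset_sum _ _).trans (Finset.sup_le fun j _ => ?_)
      exact (totalDegree_pow _ _).trans (by
        have := deg_H m A r s j; omega)
    have := deg_L m k₀; omega
  · refine (totalDegree_mul _ _).trans ?_
    have h1 : ((4 : MvPolynomial (Fin (m+1)) ℝ) * Gp m r k₀ k₁).totalDegree ≤ 2 := by
      refine (totalDegree_mul _ _).trans ?_
      rw [deg_four, zero_add]; exact deg_G m r k₀ k₁
    have h2 : (∑ j, C (r j) * Hp m A r s j).totalDegree ≤ 1 := by
      refine (totalDegree_finset_sum _ _).trans (Finset.sup_le fun j _ => ?_)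
      refine (totalDegree_mul _ _).trans ?_
      rw [totalDegree_C, zero_add]; exact deg_H m A r s j
    omega
  · refine (totalDegree_mul _ _).trans ?_
    rw [deg_two, zero_add]
    refine (totalDegree_finset_sum _ _).trans (Finset.sup_le fun j _ => ?_)
    refine (totalDegree_finset_sum _ _).trans (Finset.sup_le fun i _ => ?_)
    refine (totalDegree_mul _ _).trans ?_
    rw [totalDegree_C, add_zero]
    refine le_trans (totalDegree_mul _ _) ?_
    have := deg_H m A r s j; have := deg_H m A r s i; omega
end

section
/- Suppose homogeneous polynomials p₅,…,p₉ (deg pᵢ = i), f₁, f₂ (deg fᵢ = i), and homogeneous L₀,…,L₄ (deg Lᵢ = i) with L₀ a nonzero constant satisfy: p₉x³ = L₀x¹², p₈x³ + p₉f₂ = L₁x¹⁰, p₇x³ + p₈f₂ + p₉f₁ = L₂x⁸, p₆x³ + p₇f₂ + p₈f₁ = L₃x⁶, and p₅x³ + p₆f₂ + p₇f₁ = L₄x⁴. Then f₂ vanishes at x = 0 as a polynomial in y, i.e., the restriction f₂(0,y) = 0 for all y. -/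
open MvPolynomial

theorem stmt_11 (m : ℕ)
    (p₅ p₆ p₇ p₈ p₉ f₁ f₂ : MvPolynomial (Fin (m + 1)) ℝ)
    (L : Fin 5 → MvPolynomial (Fin (m + 1)) ℝ)
    (hp5 : p₅.IsHomogeneous 5) (hp6 : p₆.IsHomogeneous 6) (hp7 : p₇.IsHomogeneous 7)
    (hp8 : p₈.IsHomogeneous 8) (hp9 : p₉.IsHomogeneous 9)
    (hf1 : f₁.IsHomogeneous 1) (hf2 : f₂.IsHomogeneous 2)
    (hL : ∀ i : Fin 5, (L i).IsHomogeneous (i : ℕ))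
    (c : ℝ) (hc : c ≠ 0) (hL0 : L 0 = C c)
    (e1 : p₉ * X 0 ^ 3 = L 0 * X 0 ^ 12)
    (e2 : p₈ * X 0 ^ 3 + p₉ * f₂ = L 1 * X 0 ^ 10)
    (e3 : p₇ * X 0 ^ 3 + p₈ * f₂ + p₉ * f₁ = L 2 * X 0 ^ 8)
    (e4 : p₆ * X 0 ^ 3 + p₇ * f₂ + p₈ * f₁ = L 3 * X 0 ^ 6)
    (e5 : p₅ * X 0 ^ 3 + p₆ * f₂ + p₇ * f₁ = L 4 * X 0 ^ 4) :
    ∀ v : Fin (m + 1) → ℝ, v 0 = 0 → eval v f₂ = 0 := by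
  intro v hv
  have hX3 : (X 0 : MvPolynomial (Fin (m + 1)) ℝ) ^ 3 ≠ 0 :=
    pow_ne_zero 3 (X_ne_zero 0)
  have h9 : p₉ = C c * X 0 ^ 9 := by
    apply mul_right_cancel₀ hX3
    rw [e1, hL0]; ring
  have h8 : p₈ = (L 1 * X 0 - C c * f₂) * X 0 ^ 6 := by
    apply mul_right_cancel₀ hX3
    have : p₈ * X 0 ^ 3 = L 1 * X 0 ^ 10 - p₉ * f₂ := by linear_combination e2
    rw [this, h9]; ring
  have h7 : p₇ = (L 2 * X 0 ^ 2 - (L 1 * X 0 - C c * f₂) * f₂ - C c * X 0 ^ 3 * f₁) * X 0 ^ 3 := by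
    apply mul_right_cancel₀ hX3
    have : p₇ * X 0 ^ 3 = L 2 * X 0 ^ 8 - p₈ * f₂ - p₉ * f₁ := by linear_combination e3
    rw [this, h8, h9]; ring
  have h6 : p₆ = L 3 * X 0 ^ 3
      - (L 2 * X 0 ^ 2 - (L 1 * X 0 - C c * f₂) * f₂ - C c * X 0 ^ 3 * f₁) * f₂
      - (L 1 * X 0 - C c * f₂) * X 0 ^ 3 * f₁ := by
    apply mul_right_cancel₀ hX3
    have : p₆ * X 0 ^ 3 = L 3 * X 0 ^ 6 - p₇ * f₂ - p₈ * f₁ := by linear_combination e4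
    rw [this, h7, h8]; ring
  have h := congrArg (eval v) e5
  simp only [map_add, map_mul, map_pow, eval_X, hv, h6, h7, map_sub, eval_C] at h
  have hfin : c * (eval v f₂) ^ 4 = 0 := by nlinarith [h]
  have : (eval v f₂) ^ 4 = 0 := by
    rcases mul_eq_zero.mp hfin with h' | h'
    · exact absurd h' hc
    · exact h'
  exact pow_eq_zero_iff (by norm_num) |>.mp this
end

section
/- If g ∈ ℝ[x₁,…,xₙ] is a polynomial of degree 3 whose gradient vanishes at every real zero of g, then g is not irreducible over ℝ. -/
open MvPolynomial

namespace Stmt15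

noncomputable def lineP {n : ℕ} (g : MvPolynomial (Fin n) ℝ) (x v : Fin n → ℝ) : Polynomial ℝ :=
  MvPolynomial.aeval (fun i => Polynomial.C (x i) + Polynomial.C (v i) * Polynomial.X) g

lemma eval_lineP {n : ℕ} (g : MvPolynomial (Fin n) ℝ) (x v : Fin n → ℝ) (t : ℝ) :
    (lineP g x v).eval t = eval (x + t • v) g := by
  rw [lineP, ← Polynomial.coe_aeval_eq_eval, MvPolynomial.comp_aeval_apply]
  have : (fun i => (Polynomial.aeval t) (Polynomial.C (x i) + Polynomial.C (v i) * Polynomial.X))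
      = fun i => (x + t • v) i := by
    funext i
    simp [Pi.smul_apply, smul_eq_mul]
    ring
  rw [this, ← MvPolynomial.coe_aeval_eq_eval]
  rfl

lemma lin_natDegree {a b : ℝ} :
    (Polynomial.C a + Polynomial.C b * Polynomial.X).natDegree ≤ 1 := by
  compute_degree

lemma prodpow_natDegree {n : ℕ} (s : Finset (Fin n)) (m : Fin n → ℕ) (f : Fin n → Polynomial ℝ)
    (hf : ∀ i, (f i).natDegree ≤ 1) :
    (∏ i ∈ s, f i ^ m i).natDegree ≤ ∑ i ∈ s, m i := by
  refine le_trans (Polynomial.natDegree_prod_le _ _) (Finset.sum_le_sum fun i _ => ?_)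
  calc (f i ^ m i).natDegree ≤ m i * (f i).natDegree := Polynomial.natDegree_pow_le
    _ ≤ m i * 1 := Nat.mul_le_mul_left _ (hf i)
    _ = m i := mul_one _

lemma prodpow_coeff {n : ℕ} (s : Finset (Fin n)) (m : Fin n → ℕ) (f : Fin n → Polynomial ℝ)
    (hf : ∀ i, (f i).natDegree ≤ 1) :
    (∏ i ∈ s, f i ^ m i).coeff (∑ i ∈ s, m i) = ∏ i ∈ s, (f i).coeff 1 ^ m i := by
  classical
  induction s using Finset.induction with
  | empty => simp
  | insert _ _ hx ih =>
    rename_i a s'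
    rw [Finset.prod_insert hx, Finset.sum_insert hx, Finset.prod_insert hx,
      Polynomial.coeff_mul_add_eq_of_natDegree_le
        (le_trans Polynomial.natDegree_pow_le (by
          calc m a * (f a).natDegree ≤ m a * 1 := Nat.mul_le_mul_left _ (hf a)
            _ = m a := mul_one _))
        (prodpow_natDegree s' m f hf), ih]
    congr 1
    have := Polynomial.coeff_pow_of_natDegree_le (p := f a) (n := 1) (m := m a) (hf a)
    simpa using this

lemma natDegree_lineP {n : ℕ} (g : MvPolynomial (Fin n) ℝ) (x v : Fin n → ℝ) :
    (lineP g x v).natDegree ≤ g.totalDegree := by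
  classical
  conv_lhs => rw [g.as_sum]
  rw [lineP] at *
  rw [show (MvPolynomial.aeval
      (fun i => Polynomial.C (x i) + Polynomial.C (v i) * Polynomial.X))
      (∑ m ∈ g.support, monomial m (coeff m g))
    = ∑ m ∈ g.support, (MvPolynomial.aeval
      (fun i => Polynomial.C (x i) + Polynomial.C (v i) * Polynomial.X))
        (monomial m (coeff m g)) from map_sum _ _ _]
  apply Polynomial.natDegree_sum_le_of_forall_le
  intro m hm
  rw [MvPolynomial.aeval_monomial]
  refine le_trans (Polynomial.natDegree_C_mul_le _ _) ?_
  refine le_trans ?_ (MvPolynomial.le_totalDegree hm)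
  rw [Finsupp.prod, Finsupp.sum]
  exact prodpow_natDegree _ _ _ (fun i => lin_natDegree)

lemma coeff_lineP {n : ℕ} (g : MvPolynomial (Fin n) ℝ) (x v : Fin n → ℝ) {N : ℕ}
    (hdeg : g.totalDegree ≤ N) :
    (lineP g x v).coeff N = eval v (homogeneousComponent N g) := by
  classical
  conv_lhs => rw [g.as_sum]
  rw [lineP]
  rw [show (MvPolynomial.aeval
      (fun i => Polynomial.C (x i) + Polynomial.C (v i) * Polynomial.X))
      (∑ m ∈ g.support, monomial m (coeff m g))
    = ∑ m ∈ g.support, (MvPolynomial.aeval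
      (fun i => Polynomial.C (x i) + Polynomial.C (v i) * Polynomial.X))
        (monomial m (coeff m g)) from map_sum _ _ _]
  rw [Polynomial.finset_sum_coeff]
  rw [homogeneousComponent_apply, map_sum, Finset.sum_filter]
  apply Finset.sum_congr rfl
  intro m hm
  rw [MvPolynomial.aeval_monomial, Polynomial.algebraMap_eq, Polynomial.coeff_C_mul]
  by_cases hdm : m.degree = N
  · rw [if_pos hdm]
    have hsum : (∑ i ∈ m.support, m i) = N := by
      rw [← hdm]; rfl
    rw [Finsupp.prod, ← hsum, prodpow_coeff _ _ _ (fun i => lin_natDegree)]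
    rw [eval_monomial, Finsupp.prod]
    congr 1
    apply Finset.prod_congr rfl
    intro i _
    simp
  · rw [if_neg hdm]
    have hle : (m.sum fun _ e => e) ≤ N := le_trans (MvPolynomial.le_totalDegree hm) hdeg
    have hlt : (∑ i ∈ m.support, m i) < N :=
      lt_of_le_of_ne hle (fun h => hdm (by rw [← h]; rfl))
    rw [Finsupp.prod, Polynomial.coeff_eq_zero_of_natDegree_lt
      (lt_of_le_of_lt (prodpow_natDegree _ _ _ (fun i => lin_natDegree)) hlt), mul_zero]

lemma derivative_lineP {n : ℕ} (g : MvPolynomial (Fin n) ℝ) (x v : Fin n → ℝ) :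
    Polynomial.derivative (lineP g x v)
      = ∑ i : Fin n, Polynomial.C (v i) * lineP (pderiv i g) x v := by
  classical
  induction g using MvPolynomial.induction_on with
  | C a => simp [lineP]
  | add p q hp hq =>
    simp only [lineP, map_add] at *
    rw [hp, hq, ← Finset.sum_add_distrib]
    apply Finset.sum_congr rfl
    intro i _
    ring
  | mul_X p j hp =>
    have hXj : lineP (X j : MvPolynomial (Fin n) ℝ) x v
        = Polynomial.C (x j) + Polynomial.C (v j) * Polynomial.X := by
      simp [lineP]
    have hmul : lineP (p * X j) x v = lineP p x v *
        (Polynomial.C (x j) + Polynomial.C (v j) * Polynomial.X) := by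
      rw [lineP, map_mul, ← hXj]; rfl
    rw [hmul, Polynomial.derivative_mul, hp]
    have hder2 : Polynomial.derivative
        (Polynomial.C (x j) + Polynomial.C (v j) * Polynomial.X) = Polynomial.C (v j) := by
      simp
    rw [hder2]
    have hterm : ∀ i : Fin n, Polynomial.C (v i) * lineP (pderiv i (p * X j)) x v
        = Polynomial.C (v i) * lineP (pderiv i p) x v *
            (Polynomial.C (x j) + Polynomial.C (v j) * Polynomial.X)
          + (if i = j then Polynomial.C (v i) * lineP p x v else 0) := by
      intro i
      rw [pderiv_mul, pderiv_X]
      by_cases hij : i = j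
      · subst hij
        simp only [Pi.single_eq_same, mul_one, if_pos rfl, if_true, eq_self_iff_true]
        rw [lineP, map_add, map_mul]
        rw [show (MvPolynomial.aeval fun i =>
            Polynomial.C (x i) + Polynomial.C (v i) * Polynomial.X) (X i)
          = Polynomial.C (x i) + Polynomial.C (v i) * Polynomial.X from by simp]
        rw [lineP, lineP]
        ring
      · rw [Pi.single_eq_of_ne (Ne.symm hij)]
        simp only [mul_zero, add_zero, if_neg hij]
        rw [lineP, map_mul, lineP]
        rw [show (MvPolynomial.aeval fun i =>
            Polynomial.C (x i) + Polynomial.C (v i) * Polynomial.X) (X j)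
          = Polynomial.C (x j) + Polynomial.C (v j) * Polynomial.X from by simp]
        ring
    rw [Finset.sum_congr rfl (fun i _ => hterm i), Finset.sum_add_distrib]
    rw [← Finset.sum_mul, Finset.sum_ite_eq' Finset.univ j
      (fun i => Polynomial.C (v i) * lineP p x v)]
    simp only [Finset.mem_univ, if_pos]
    ring

lemma eval_derivative_lineP {n : ℕ} (g : MvPolynomial (Fin n) ℝ) (x v : Fin n → ℝ) (t : ℝ) :
    (Polynomial.derivative (lineP g x v)).eval t
      = ∑ i : Fin n, v i * eval (x + t • v) (pderiv i g) := by
  rw [derivative_lineP]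
  rw [Polynomial.eval_finset_sum]
  apply Finset.sum_congr rfl
  intro i _
  rw [Polynomial.eval_mul, Polynomial.eval_C, eval_lineP]

lemma exists_root_of_natDegree_eq_three (p : Polynomial ℝ) (h : p.natDegree = 3) :
    ∃ t, p.eval t = 0 := by
  have hp : p ≠ 0 := fun h0 => by simp [h0] at h
  have hdeg : 0 < p.degree := Polynomial.natDegree_pos_iff_degree_pos.mp (by omega)
  set q := p.comp (-Polynomial.X) with hq
  have hqdeg : q.natDegree = 3 := by
    rw [hq, Polynomial.natDegree_comp]
    simp [h]
  have hqdeg' : 0 < q.degree := Polynomial.natDegree_pos_iff_degree_pos.mp (by omega)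
  have hqlc : q.leadingCoeff = -p.leadingCoeff := by
    rw [hq, Polynomial.leadingCoeff_comp (by simp)]
    simp [h]
    ring
  have hqev : ∀ b : ℝ, q.eval b = p.eval (-b) := by
    intro b; rw [hq, Polynomial.eval_comp]; simp
  have hcont : Continuous fun x : ℝ => p.eval x := p.continuous
  rcases le_or_gt 0 p.leadingCoeff with hlc | hlc
  · obtain ⟨a, ha⟩ := ((p.tendsto_atTop_of_leadingCoeff_nonneg hdeg hlc).eventually_ge_atTop
      0).exists
    obtain ⟨b, hb⟩ := ((q.tendsto_atBot_of_leadingCoeff_nonpos hqdeg'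
      (by rw [hqlc]; linarith)).eventually_le_atBot 0).exists
    rw [hqev] at hb
    have : (0:ℝ) ∈ Set.Icc (p.eval (-b)) (p.eval a) := ⟨hb, ha⟩
    obtain ⟨t, ht⟩ := intermediate_value_univ (-b) a hcont this
    exact ⟨t, ht⟩
  · obtain ⟨a, ha⟩ := ((p.tendsto_atBot_of_leadingCoeff_nonpos hdeg hlc.le).eventually_le_atBot
      0).exists
    obtain ⟨b, hb⟩ := ((q.tendsto_atTop_of_leadingCoeff_nonneg hqdeg'
      (by rw [hqlc]; linarith)).eventually_ge_atTop 0).exists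
    rw [hqev] at hb
    have : (0:ℝ) ∈ Set.Icc (p.eval a) (p.eval (-b)) := ⟨ha, hb⟩
    obtain ⟨t, ht⟩ := intermediate_value_univ a (-b) hcont this
    exact ⟨t, ht⟩

lemma master {n : ℕ} (g : MvPolynomial (Fin n) ℝ)
    (hdeg : g.totalDegree = 3)
    (hgrad : ∀ x : Fin n → ℝ, eval x g = 0 → ∀ i, eval x (pderiv i g) = 0)
    (h3ne : homogeneousComponent 3 g ≠ 0)
    (z : Fin n → ℝ) (hz : eval z g = 0) :
    ∀ v t, eval (z + t • v) g = eval v (homogeneousComponent 3 g) * t ^ 3 := by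
  have hdle : g.totalDegree ≤ 3 := hdeg.le
  have hd3 : ∀ v : Fin n → ℝ, (lineP g z v).natDegree ≤ 3 := fun v =>
    le_trans (natDegree_lineP g z v) hdle
  have hc3 : ∀ v, (lineP g z v).coeff 3 = eval v (homogeneousComponent 3 g) := fun v =>
    coeff_lineP g z v hdle
  have c0 : ∀ v, (lineP g z v).coeff 0 = 0 := by
    intro v
    rw [Polynomial.coeff_zero_eq_eval_zero, eval_lineP]
    simpa using hz
  have c1 : ∀ v : Fin n → ℝ, (lineP g z v).coeff 1 = 0 := by
    intro v
    have h1 : (Polynomial.derivative (lineP g z v)).coeff 0 = 0 := by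
      rw [Polynomial.coeff_zero_eq_eval_zero, eval_derivative_lineP]
      have hzv : z + (0:ℝ) • v = z := by simp
      rw [hzv]
      apply Finset.sum_eq_zero
      intro i _
      rw [hgrad z hz i, mul_zero]
    have h0 := Polynomial.coeff_derivative (lineP g z v) 0
    rw [h1] at h0
    have h0' := h0.symm
    push_cast at h0'
    linarith
  have hev : ∀ (v : Fin n → ℝ) (t : ℝ), (lineP g z v).eval t
      = (lineP g z v).coeff 2 * t ^ 2 + (lineP g z v).coeff 3 * t ^ 3 := by
    intro v t
    rw [Polynomial.eval_eq_sum_range' (lt_of_le_of_lt (hd3 v) (by norm_num : (3:ℕ) < 4))]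
    rw [Finset.sum_range_succ, Finset.sum_range_succ, Finset.sum_range_succ,
      Finset.sum_range_succ, Finset.sum_range_zero]
    rw [c0, c1]
    ring
  have hevd : ∀ (v : Fin n → ℝ) (t : ℝ), (Polynomial.derivative (lineP g z v)).eval t
      = 2 * (lineP g z v).coeff 2 * t + 3 * (lineP g z v).coeff 3 * t ^ 2 := by
    intro v t
    have hnd : (Polynomial.derivative (lineP g z v)).natDegree < 3 := by
      have h1 := Polynomial.natDegree_derivative_le (lineP g z v)
      have h2 := hd3 v
      omega
    rw [Polynomial.eval_eq_sum_range' hnd]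
    rw [Finset.sum_range_succ, Finset.sum_range_succ, Finset.sum_range_succ,
      Finset.sum_range_zero]
    rw [Polynomial.coeff_derivative, Polynomial.coeff_derivative, Polynomial.coeff_derivative,
      c1]
    push_cast
    ring
  have c2' : ∀ v, eval v (homogeneousComponent 3 g) ≠ 0 → (lineP g z v).coeff 2 = 0 := by
    intro v hv
    by_contra hc2
    set c2 := (lineP g z v).coeff 2 with hc2def
    set c3 := (lineP g z v).coeff 3 with hc3def
    have hc3ne : c3 ≠ 0 := by rw [hc3def, hc3 v]; exact hv
    set t0 : ℝ := -c2 / c3 with ht0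
    have ht0ne : t0 ≠ 0 := by
      rw [ht0]; exact div_ne_zero (neg_ne_zero.mpr hc2) hc3ne
    have h'' : c3 * t0 + c2 = 0 := by
      rw [ht0]; field_simp; ring
    have hzero : eval (z + t0 • v) g = 0 := by
      rw [← eval_lineP, hev]
      linear_combination t0 ^ 2 * h''
    have hder0 : (Polynomial.derivative (lineP g z v)).eval t0 = 0 := by
      rw [eval_derivative_lineP]
      apply Finset.sum_eq_zero
      intro i _
      rw [hgrad _ hzero i, mul_zero]
    rw [hevd] at hder0
    have hker : c2 * t0 = 0 := by linear_combination (-1 : ℝ) * hder0 + 3 * t0 * h''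
    rcases mul_eq_zero.mp hker with h | h
    · exact hc2 h
    · exact ht0ne h
  have c2all : ∀ v, (lineP g z v).coeff 2 = 0 := by
    classical
    set Sk : ℝ → MvPolynomial (Fin n) ℝ := fun k =>
      MvPolynomial.aeval (fun i => MvPolynomial.C (z i) + MvPolynomial.C k * MvPolynomial.X i) g
      with hSkdef
    have hSk : ∀ (k : ℝ) (v : Fin n → ℝ), eval v (Sk k) = (lineP g z v).eval k := by
      intro k v
      rw [eval_lineP, hSkdef]
      show (MvPolynomial.aeval v)
        ((MvPolynomial.aeval fun i => MvPolynomial.C (z i) + MvPolynomial.C k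
          * MvPolynomial.X i) g) = _
      rw [MvPolynomial.comp_aeval_apply]
      have harg : (fun i => (MvPolynomial.aeval v)
          (MvPolynomial.C (z i) + MvPolynomial.C k * MvPolynomial.X i))
          = fun i => (z + k • v) i := by
        funext i
        simp
      rw [harg, ← MvPolynomial.coe_aeval_eq_eval]
      rfl
    set Q : MvPolynomial (Fin n) ℝ :=
      MvPolynomial.C (-(1:ℝ)/2) * Sk 3 + MvPolynomial.C 2 * Sk 2
        + MvPolynomial.C (-(5:ℝ)/2) * Sk 1 + Sk 0 with hQdef
    have hQv : ∀ v, eval v Q = (lineP g z v).coeff 2 := by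
      intro v
      rw [hQdef]
      simp only [map_add, map_mul, MvPolynomial.eval_C]
      rw [hSk 3 v, hSk 2 v, hSk 1 v, hSk 0 v]
      rw [hev v 3, hev v 2, hev v 1, hev v 0]
      ring
    have hQmul : Q * homogeneousComponent 3 g = 0 := by
      apply MvPolynomial.funext
      intro x
      rw [map_mul, map_zero]
      by_cases hx : eval x (homogeneousComponent 3 g) = 0
      · rw [hx, mul_zero]
      · rw [hQv x, c2' x hx, zero_mul]
    have hQ0 : Q = 0 := by
      rcases mul_eq_zero.mp hQmul with h | h
      · exact h
      · exact absurd h h3ne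
    intro v
    rw [← hQv v, hQ0, map_zero]
  intro v t
  rw [← eval_lineP, hev, c2all, hc3]
  ring

end Stmt15

open Stmt15 in
theorem stmt_15 (n : ℕ) (g : MvPolynomial (Fin n) ℝ)
    (hdeg : g.totalDegree = 3)
    (hgrad : ∀ x : Fin n → ℝ, eval x g = 0 → ∀ i, eval x (pderiv i g) = 0) :
    ¬ Irreducible g := by
  classical
  intro hirr
  set h3 := homogeneousComponent 3 g with hh3
  have hg0 : g ≠ 0 := by
    intro h0; rw [h0] at hdeg; simp at hdeg
  have hsupp : g.support.Nonempty := by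
    rw [Finset.nonempty_iff_ne_empty]
    intro h0
    exact hg0 (MvPolynomial.support_eq_empty.mp h0)
  obtain ⟨m, hm, hmdeg⟩ :=
    Finset.exists_mem_eq_sup g.support hsupp (fun m : Fin n →₀ ℕ => m.sum fun _ e => e)
  have hmd : (m.sum fun _ e => e) = 3 := by rw [← hmdeg]; exact hdeg
  have h3ne : h3 ≠ 0 := by
    intro h0
    have hdm : m.degree = 3 := hmd
    have hco : coeff m h3 = coeff m g := by
      rw [hh3, coeff_homogeneousComponent, if_pos hdm]
    rw [h0] at hco
    simp only [MvPolynomial.coeff_zero] at hco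
    exact (MvPolynomial.mem_support_iff.mp hm) hco.symm
  obtain ⟨u, hu⟩ : ∃ u : Fin n → ℝ, eval u h3 ≠ 0 := by
    by_contra hno
    push_neg at hno
    exact h3ne (MvPolynomial.funext fun x => by rw [hno x, map_zero])
  have hrootdir : ∀ (x w : Fin n → ℝ), eval w h3 ≠ 0 → ∃ t : ℝ, eval (x + t • w) g = 0 := by
    intro x w hw
    have hco : (lineP g x w).coeff 3 = eval w h3 := coeff_lineP g x w hdeg.le
    have hnd : (lineP g x w).natDegree = 3 :=
      le_antisymm (le_trans (natDegree_lineP g x w) hdeg.le)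
        (Polynomial.le_natDegree_of_ne_zero (by rw [hco]; exact hw))
    obtain ⟨t, ht⟩ := exists_root_of_natDegree_eq_three _ hnd
    exact ⟨t, by rw [← eval_lineP]; exact ht⟩
  obtain ⟨t₀, hy0⟩ := hrootdir 0 u hu
  set y : Fin n → ℝ := 0 + t₀ • u with hydef
  have hy : eval y g = 0 := hy0
  have My := master g hdeg hgrad h3ne y hy
  have key : ∀ v : Fin n → ℝ, eval (y + v) g = eval v h3 := by
    intro v; have h := My v 1; simpa using h
  have hzero_of : ∀ w, eval w h3 = 0 → eval (y + w) g = 0 := by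
    intro w hw; rw [key w, hw]
  have htrans : ∀ w, eval w h3 = 0 → ∀ v, eval (v + w) h3 = eval v h3 := by
    intro w hw v
    have Mz := master g hdeg hgrad h3ne (y + w) (hzero_of w hw)
    have e1 : eval ((y + w) + v) g = eval v h3 := by have h := Mz v 1; simpa using h
    have e2 : eval (y + (w + v)) g = eval (w + v) h3 := key (w + v)
    have harr : y + (w + v) = (y + w) + v := by abel
    rw [harr, e1] at e2
    rw [show v + w = w + v from add_comm v w]
    exact e2.symm
  have hscale : ∀ (c : ℝ) (v : Fin n → ℝ), eval (c • v) h3 = c ^ 3 * eval v h3 := by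
    intro c v
    have e1 := key (c • v)
    have e2 := My v c
    rw [← e1, e2]; ring
  have hWadd : ∀ w w', eval w h3 = 0 → eval w' h3 = 0 → eval (w + w') h3 = 0 := by
    intro w w' hw hw'; rw [htrans w' hw' w, hw]
  have hWsub : ∀ w w', eval w h3 = 0 → eval w' h3 = 0 → eval (w - w') h3 = 0 := by
    intro w w' hw hw'
    have h := htrans w' hw' (w - w')
    rw [sub_add_cancel] at h
    rw [← h]; exact hw
  have hexists : ∀ x : Fin n → ℝ, ∃ a : ℝ, eval (x - a • u) h3 = 0 := by
    intro x
    have hmu : eval (-u) h3 ≠ 0 := by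
      have h := hscale (-1) u
      rw [neg_one_smul] at h
      rw [h]
      intro habs
      apply hu
      nlinarith [habs]
    obtain ⟨t, ht⟩ := hrootdir (y + x) (-u) hmu
    refine ⟨t, ?_⟩
    have harr : (y + x) + t • (-u) = y + (x - t • u) := by
      rw [smul_neg]; abel
    rw [harr] at ht
    rw [← key (x - t • u)]
    exact ht
  set ℓ : (Fin n → ℝ) → ℝ := fun x => Classical.choose (hexists x) with hldef
  have hℓ : ∀ x, eval (x - ℓ x • u) h3 = 0 := fun x => Classical.choose_spec (hexists x)
  have huniq : ∀ x a, eval (x - a • u) h3 = 0 → a = ℓ x := by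
    intro x a ha
    by_contra hne
    have hdiff : eval ((x - a • u) - (x - ℓ x • u)) h3 = 0 := hWsub _ _ ha (hℓ x)
    have harr : (x - a • u) - (x - ℓ x • u) = (ℓ x - a) • u := by
      rw [sub_smul]; abel
    rw [harr] at hdiff
    have hc : (ℓ x - a) ≠ 0 := sub_ne_zero.mpr (Ne.symm hne)
    have h := hscale (ℓ x - a)⁻¹ ((ℓ x - a) • u)
    rw [hdiff, smul_smul, inv_mul_cancel₀ hc, one_smul, mul_zero] at h
    exact hu h
  have hval : ∀ x, eval x h3 = (ℓ x) ^ 3 * eval u h3 := by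
    intro x
    have harr : x = ℓ x • u + (x - ℓ x • u) := by abel
    calc eval x h3 = eval (ℓ x • u + (x - ℓ x • u)) h3 := by rw [← harr]
      _ = eval (ℓ x • u) h3 := htrans _ (hℓ x) _
      _ = (ℓ x) ^ 3 * eval u h3 := hscale _ _
  have hadd : ∀ x x', ℓ (x + x') = ℓ x + ℓ x' := by
    intro x x'
    refine (huniq (x + x') (ℓ x + ℓ x') ?_).symm
    have harr : (x + x') - (ℓ x + ℓ x') • u = (x - ℓ x • u) + (x' - ℓ x' • u) := by
      rw [add_smul]; abel
    rw [harr]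
    exact hWadd _ _ (hℓ x) (hℓ x')
  have hsmul : ∀ (c : ℝ) x, ℓ (c • x) = c * ℓ x := by
    intro c x
    refine (huniq (c • x) (c * ℓ x) ?_).symm
    have harr : c • x - (c * ℓ x) • u = c • (x - ℓ x • u) := by
      rw [smul_sub, smul_smul]
    rw [harr, hscale, hℓ x, mul_zero]
  have hzeroℓ : ℓ 0 = 0 := by
    have h1 := hsmul 0 0
    rw [zero_smul, zero_mul] at h1
    exact h1
  have hsum : ∀ (s : Finset (Fin n)) (f : Fin n → (Fin n → ℝ)),
      ℓ (∑ i ∈ s, f i) = ∑ i ∈ s, ℓ (f i) := by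
    intro s f
    induction s using Finset.induction with
    | empty => simpa using hzeroℓ
    | insert _ _ hx ih =>
      rename_i a s'
      rw [Finset.sum_insert hx, Finset.sum_insert hx, hadd, ih]
  have hrep : ∀ x : Fin n → ℝ, ℓ x = ∑ i, x i * ℓ (fun j => if i = j then (1:ℝ) else 0) := by
    intro x
    conv_lhs => rw [pi_eq_sum_univ x]
    rw [hsum]
    apply Finset.sum_congr rfl
    intro i _
    rw [hsmul]
  set c := eval u h3 with hcdef
  set L : MvPolynomial (Fin n) ℝ := MvPolynomial.C (-(ℓ y)) +
    ∑ i, MvPolynomial.C (ℓ (fun j => if i = j then (1:ℝ) else 0)) * MvPolynomial.X i with hLdef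
  have hLx : ∀ x, eval x L = ℓ x - ℓ y := by
    intro x
    rw [hLdef]
    rw [map_add, MvPolynomial.eval_C, map_sum]
    simp only [map_mul, MvPolynomial.eval_C, MvPolynomial.eval_X]
    rw [show (∑ i, ℓ (fun j => if i = j then (1:ℝ) else 0) * x i)
        = ∑ i, x i * ℓ (fun j => if i = j then (1:ℝ) else 0) from
      Finset.sum_congr rfl fun i _ => mul_comm _ _]
    rw [← hrep x]
    ring
  have hgL : g = MvPolynomial.C c * L ^ 3 := by
    apply MvPolynomial.funext
    intro x
    have h1 : eval x g = eval (x - y) h3 := by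
      have harr : y + (x - y) = x := by abel
      conv_lhs => rw [← harr]
      exact key (x - y)
    have hly : ℓ (x - y) = ℓ x - ℓ y := by
      have h2 := hadd (x - y) y
      rw [sub_add_cancel] at h2
      linarith
    rw [h1, hval, map_mul, MvPolynomial.eval_C, map_pow, hLx, hly]
    ring
  have hLnotunit : ¬ IsUnit L := by
    intro hL
    have hcunit : IsUnit (MvPolynomial.C c : MvPolynomial (Fin n) ℝ) :=
      (isUnit_iff_ne_zero.mpr (by rw [hcdef]; exact hu)).map MvPolynomial.C
    have hgunit : IsUnit g := by rw [hgL]; exact hcunit.mul (hL.pow 3)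
    exact hirr.not_isUnit hgunit
  rcases hirr.isUnit_or_isUnit
      (show g = (MvPolynomial.C c * L) * (L * L) by rw [hgL]; ring) with h | h
  · exact hLnotunit (isUnit_of_mul_isUnit_right h)
  · exact hLnotunit (isUnit_of_mul_isUnit_left h)
end

section
/- Let v be a real polynomial of degree 1 and w a real polynomial such that w·v² has degree 3 and the gradient of g = w·v² vanishes at every real zero of g. Then w is a constant multiple of v. Consequently g = c·v³. -/
open MvPolynomial

lemma finsupp_classify {n : ℕ} (d : Fin n →₀ ℕ) (hd : d.degree ≤ 1) :
    d = 0 ∨ ∃ i, d = Finsupp.single i 1 := by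
  rcases eq_or_ne d 0 with h | h
  · exact Or.inl h
  · right
    obtain ⟨i, hi⟩ := Finsupp.support_nonempty_iff.mpr h
    have hdi : d i = 1 := by
      have := Finsupp.le_degree i d
      have := Finsupp.mem_support_iff.mp hi
      omega
    refine ⟨i, Finsupp.ext fun j => ?_⟩
    rcases eq_or_ne j i with rfl | hj
    · simp [hdi]
    · rw [Finsupp.single_apply, if_neg (Ne.symm hj)]
      by_contra hdj
      have hj' : j ∈ d.support := Finsupp.mem_support_iff.mpr hdj
      have h2 : d i + d j ≤ d.degree := by
        rw [Finsupp.degree]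
        have : ({i, j} : Finset (Fin n)) ⊆ d.support := by
          intro k hk; simp at hk; rcases hk with rfl | rfl <;> assumption
        calc d i + d j = ∑ k ∈ ({i, j} : Finset (Fin n)), d k := by
              rw [Finset.sum_pair hj.symm]
          _ ≤ ∑ k ∈ d.support, d k := Finset.sum_le_sum_of_subset this
      omega

lemma affine_decomp {n : ℕ} (p : MvPolynomial (Fin n) ℝ) (hp : p.totalDegree ≤ 1) :
    p = C (coeff 0 p) + ∑ i, C (coeff (Finsupp.single i 1) p) * X i := by
  ext d
  rw [coeff_add, coeff_C, coeff_sum]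
  simp_rw [coeff_C_mul, coeff_X']
  rcases le_or_gt d.degree 1 with hd | hd
  · rcases finsupp_classify d hd with rfl | ⟨i, rfl⟩
    · simp [fun i : Fin n => (fun h => one_ne_zero (Finsupp.single_eq_zero.mp h) : Finsupp.single i 1 ≠ 0)]
    · rw [if_neg (fun h => one_ne_zero (Finsupp.single_eq_zero.mp h.symm)), zero_add,
        Finset.sum_eq_single i]
      · rw [if_pos rfl, mul_one]
      · intro j _ hji
        rw [if_neg, mul_zero]
        intro hc
        exact hji (Finsupp.single_left_injective one_ne_zero hc)
      · intro h; exact absurd (Finset.mem_univ i) h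
  · have hz : coeff d p = 0 := by
      apply coeff_eq_zero_of_totalDegree_lt
      exact lt_of_le_of_lt hp hd
    rw [hz, if_neg, Finset.sum_eq_zero, add_zero]
    · intro j _
      rw [if_neg, mul_zero]
      intro hc
      rw [← hc] at hd
      simp [Finsupp.degree_single] at hd
    · intro hc
      rw [← hc] at hd
      simp [Finsupp.degree, Finsupp.support_zero] at hd

lemma hc_ne_zero {σ : Type*} (p : MvPolynomial σ ℝ) (hp : p ≠ 0) :
    homogeneousComponent p.totalDegree p ≠ 0 := by
  obtain ⟨d, hd, hdeg⟩ := p.support.exists_mem_eq_sup (support_nonempty.mpr hp)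
    (fun m : σ →₀ ℕ => m.sum fun _ e => e)
  intro h
  have : coeff d (homogeneousComponent p.totalDegree p) = coeff d p := by
    rw [coeff_homogeneousComponent, if_pos]
    rw [totalDegree, hdeg]
    rfl
  rw [h] at this
  exact (mem_support_iff.mp hd) this.symm

lemma tD_mul_eq {σ : Type*} (p q : MvPolynomial σ ℝ) (hp : p ≠ 0) (hq : q ≠ 0) :
    (p * q).totalDegree = p.totalDegree + q.totalDegree := by
  refine le_antisymm (totalDegree_mul p q) ?_
  by_contra hlt
  push_neg at hlt
  set a := p.totalDegree with ha
  set b := q.totalDegree with hb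
  have hz : homogeneousComponent (a + b) (p * q) = 0 :=
    homogeneousComponent_eq_zero _ _ hlt
  have hpq : p * q = ∑ i ∈ Finset.range (a+1), ∑ j ∈ Finset.range (b+1),
      homogeneousComponent i p * homogeneousComponent j q := by
    rw [← Finset.sum_mul_sum, sum_homogeneousComponent, sum_homogeneousComponent]
  have key : homogeneousComponent (a + b) (p * q)
      = homogeneousComponent a p * homogeneousComponent b q := by
    rw [hpq, map_sum, Finset.sum_eq_single a]
    · rw [map_sum, Finset.sum_eq_single b]
      · exact (homogeneousComponent_of_mem (m := a + b) ((mem_homogeneousSubmodule _ _).mpr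
          ((homogeneousComponent_isHomogeneous a p).mul
            (homogeneousComponent_isHomogeneous b q)))).trans (if_pos rfl)
      · intro j hj hjne
        rw [homogeneousComponent_of_mem (m := a + b) ((mem_homogeneousSubmodule _ _).mpr
          ((homogeneousComponent_isHomogeneous a p).mul
            (homogeneousComponent_isHomogeneous j q))), if_neg (by omega)]
      · intro hmem; simp at hmem
    · intro i hi hine
      rw [map_sum, Finset.sum_eq_zero]
      intro j hj
      simp only [Finset.mem_range] at hi hj
      rw [homogeneousComponent_of_mem (m := a + b) ((mem_homogeneousSubmodule _ _).mpr
          ((homogeneousComponent_isHomogeneous i p).mul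
            (homogeneousComponent_isHomogeneous j q))), if_neg (by omega)]
    · intro hmem; simp at hmem
  rw [hz] at key
  exact mul_ne_zero (hc_ne_zero p hp) (hc_ne_zero q hq) key.symm

theorem stmt_16 (n : ℕ) (v w : MvPolynomial (Fin n) ℝ)
    (hv : v.totalDegree = 1) (hdeg : (w * v ^ 2).totalDegree = 3)
    (hgrad : ∀ x : Fin n → ℝ, eval x (w * v ^ 2) = 0 →
      ∀ i, eval x (pderiv i (w * v ^ 2)) = 0) :
    ∃ c : ℝ, w = C c * v ∧ w * v ^ 2 = C c * v ^ 3 := by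
  have hv0 : v ≠ 0 := fun h => by simp [h] at hv
  have hw0 : w ≠ 0 := fun h => by simp [h] at hdeg
  have hv2 : (v ^ 2).totalDegree = 2 := by
    rw [sq, tD_mul_eq v v hv0 hv0, hv]
  have hw1 : w.totalDegree = 1 := by
    have := tD_mul_eq w (v ^ 2) hw0 (pow_ne_zero 2 hv0)
    rw [hdeg, hv2] at this
    omega
  set a : Fin n → ℝ := fun i => coeff (Finsupp.single i 1) v with ha
  set b : ℝ := coeff 0 v with hb
  set c : Fin n → ℝ := fun i => coeff (Finsupp.single i 1) w with hc
  set d : ℝ := coeff 0 w with hd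
  have hvd : v = C b + ∑ i, C (a i) * X i := affine_decomp v hv.le
  have hwd : w = C d + ∑ i, C (c i) * X i := affine_decomp w hw1.le
  -- evaluation formulas
  have hev : ∀ x : Fin n → ℝ, eval x v = b + ∑ i, a i * x i := by
    intro x; rw [hvd]; simp
  have hew : ∀ x : Fin n → ℝ, eval x w = d + ∑ i, c i * x i := by
    intro x; rw [hwd]; simp
  -- derivative of w
  have hpw : ∀ i, pderiv i w = C (c i) := by
    intro i
    rw [hwd]
    rw [map_add, pderiv_C, map_sum, zero_add, Finset.sum_eq_single i]
    · rw [pderiv_C_mul, pderiv_X_self, mul_one]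
    · intro j _ hji
      rw [pderiv_C_mul, pderiv_X_of_ne hji, mul_zero]
    · intro h; exact absurd (Finset.mem_univ i) h
  -- c ≠ 0
  have hcne : ∃ i, c i ≠ 0 := by
    by_contra h
    push_neg at h
    have : w = C d := by
      rw [hwd, Finset.sum_eq_zero (fun i _ => by rw [h i, map_zero, zero_mul]), add_zero]
    rw [this] at hw1
    simp [totalDegree_C] at hw1
  obtain ⟨i₀, hi₀⟩ := hcne
  have hane : ∃ i, a i ≠ 0 := by
    by_contra h
    push_neg at h
    have : v = C b := by
      rw [hvd, Finset.sum_eq_zero (fun i _ => by rw [h i, map_zero, zero_mul]), add_zero]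
    rw [this] at hv
    simp [totalDegree_C] at hv
  -- zeros of w are zeros of v
  have hzero : ∀ x : Fin n → ℝ, eval x w = 0 → eval x v = 0 := by
    intro x hx
    have hg : eval x (w * v ^ 2) = 0 := by simp [hx]
    have h1 := hgrad x hg i₀
    rw [pderiv_mul, map_add, eval_mul, eval_mul, hpw i₀, eval_C, hx, zero_mul, add_zero] at h1
    rcases mul_eq_zero.mp h1 with h | h
    · exact absurd h hi₀
    · rw [eval_pow] at h
      exact pow_eq_zero_iff two_ne_zero |>.mp h
  set S : ℝ := ∑ i, c i ^ 2 with hS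
  have hSpos : 0 < S := by
    have : c i₀ ^ 2 ≤ S := Finset.single_le_sum (fun i _ => sq_nonneg (c i)) (Finset.mem_univ i₀)
    have h1 : 0 < c i₀ ^ 2 := lt_of_le_of_ne (sq_nonneg _) (Ne.symm (pow_ne_zero 2 hi₀))
    linarith
  set T : ℝ := ∑ i, a i * c i with hT
  set μ : ℝ := T / S with hμ
  set x₀ : Fin n → ℝ := fun i => (-d / S) * c i with hx₀
  have hwx₀ : eval x₀ w = 0 := by
    rw [hew]
    simp only [hx₀]
    rw [show ∑ i, c i * (-d / S * c i) = (-d / S) * ∑ i, c i ^ 2 from by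
      rw [Finset.mul_sum]; congr 1; ext i; ring]
    field_simp
    rw [← hS]; ring
  have hvx₀ : eval x₀ v = 0 := hzero x₀ hwx₀
  -- orthogonality
  have horth : ∀ y : Fin n → ℝ, (∑ i, c i * y i) = 0 → (∑ i, a i * y i) = 0 := by
    intro y hy
    have hw' : eval (fun i => x₀ i + y i) w = 0 := by
      rw [hew]
      rw [show ∑ i, c i * (x₀ i + y i) = (∑ i, c i * x₀ i) + ∑ i, c i * y i from by
        rw [← Finset.sum_add_distrib]; congr 1; ext i; ring]
      rw [hy, add_zero]
      have := hwx₀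
      rw [hew] at this
      linarith
    have hv' := hzero _ hw'
    rw [hev] at hv'
    rw [show ∑ i, a i * (x₀ i + y i) = (∑ i, a i * x₀ i) + ∑ i, a i * y i from by
      rw [← Finset.sum_add_distrib]; congr 1; ext i; ring] at hv'
    have := hvx₀
    rw [hev] at this
    linarith
  -- a = μ c
  have hac : ∀ i, a i = μ * c i := by
    set y : Fin n → ℝ := fun i => a i - μ * c i with hy
    have hcy : (∑ i, c i * y i) = 0 := by
      simp only [hy]
      rw [show ∑ i, c i * (a i - μ * c i) = (∑ i, a i * c i) - μ * ∑ i, c i ^ 2 from by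
        rw [Finset.mul_sum, ← Finset.sum_sub_distrib]; congr 1; ext i; ring]
      rw [hμ]
      field_simp
      rw [← hS, ← hT]; ring
    have hay := horth y hcy
    have hyy : (∑ i, y i ^ 2) = 0 := by
      rw [show ∑ i, y i ^ 2 = (∑ i, a i * y i) - μ * ∑ i, c i * y i from by
        rw [Finset.mul_sum, ← Finset.sum_sub_distrib]; congr 1; ext i; simp only [hy]; ring]
      rw [hay, hcy, mul_zero, sub_zero]
    have hy0 : ∀ i, y i = 0 := by
      intro i
      have := (Finset.sum_eq_zero_iff_of_nonneg (fun j _ => sq_nonneg (y j))).mp hyy i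
        (Finset.mem_univ i)
      exact pow_eq_zero_iff two_ne_zero |>.mp this
    intro i
    have := hy0 i
    simp only [hy] at this
    linarith
  have hμne : μ ≠ 0 := by
    obtain ⟨i, hi⟩ := hane
    intro h
    rw [hac i, h, zero_mul] at hi
    exact hi rfl
  -- b = μ * d
  have hbd : b = μ * d := by
    have := hvx₀
    rw [hev] at this
    have h2 := hwx₀
    rw [hew] at h2
    rw [show ∑ i, a i * x₀ i = μ * ∑ i, c i * x₀ i from by
      rw [Finset.mul_sum]; congr 1; ext i; rw [hac i]; ring] at this
    linear_combination this - μ * h2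
  have hveq : v = C μ * w := by
    rw [hvd, hwd, hbd]
    rw [mul_add, ← map_mul, Finset.mul_sum]
    congr 1
    apply Finset.sum_congr rfl
    intro i _
    rw [hac i, ← mul_assoc, ← map_mul]
  have hwv : w = C μ⁻¹ * v := by
    rw [hveq, ← mul_assoc, ← map_mul, inv_mul_cancel₀ hμne, map_one, one_mul]
  exact ⟨μ⁻¹, hwv, by rw [hwv]; ring⟩
end

section
/- For any polynomial f of degree 3 on ℝⁿ, the polynomial (2|∇f|²Δf − ∇fᵗ∇|∇f|²)² has total degree at most 10 when the cubic part of f is x³ and the remaining terms have degree ≤ 2 with the coefficient structure f = x³ + f₂ + f₁; more precisely, its degree-8-and-higher part equals 6⁴(tr A)²x⁸ + (terms of the stated form divisible by suitable powers of x), where A is the symmetric matrix of the y-quadratic part of f₂. -/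
open MvPolynomial

namespace Aux17
variable (m : ℕ) (A : Matrix (Fin m) (Fin m) ℝ) (r s : Fin m → ℝ) (k₀ k₁ : ℝ)

noncomputable def E : MvPolynomial (Fin (m+1)) ℝ :=
  C (2*k₀) * X 0 + (∑ i, C (r i) * X i.succ) + C k₁
noncomputable def P0 : MvPolynomial (Fin (m+1)) ℝ :=
  C 3 * X 0 ^ 2 + E m r k₀ k₁
noncomputable def Pj (j : Fin m) : MvPolynomial (Fin (m+1)) ℝ :=
  (∑ k, C (A j k + A k j) * X k.succ) + C (r j) * X 0 + C (s j)
noncomputable def S2 : MvPolynomial (Fin (m+1)) ℝ := ∑ j, (Pj m A r s j)^2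
noncomputable def T : MvPolynomial (Fin (m+1)) ℝ := ∑ j, Pj m A r s j * C (r j)
noncomputable def U : MvPolynomial (Fin (m+1)) ℝ :=
  ∑ j, Pj m A r s j * ∑ k, Pj m A r s k * C (A k j + A j k)

theorem pd0 : pderiv 0 (fcmc m A r s k₀ k₁) = P0 m r k₀ k₁ := by
  simp [fcmc, P0, E, pderiv_pow, pderiv_X, Fin.succ_ne_zero, pderiv_X_of_ne, pderiv_C_mul,
    map_ofNat, map_mul]
  ring

theorem pds (j : Fin m) : pderiv j.succ (fcmc m A r s k₀ k₁) = Pj m A r s j := by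
  simp only [fcmc, Pj, map_add, pderiv_pow, pderiv_X, pderiv_C_mul, pderiv_C, pderiv_mul, map_sum,
    Pi.single_apply, Fin.succ_inj, (Fin.succ_ne_zero j).symm, eq_comm (a := (0 : Fin (m+1)))]
  simp [Finset.mul_sum, Finset.sum_ite_eq', Finset.sum_ite_eq, mul_ite, ite_mul,
    Finset.sum_add_distrib, map_add, eq_comm (a := j)]
  rw [← Finset.sum_add_distrib]
  exact Finset.sum_congr rfl fun _ _ => by ring

theorem pd00 : pderiv 0 (P0 m r k₀ k₁) = C 6 * X 0 + C (2*k₀) := by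
  simp [P0, E, pderiv_pow, pderiv_X, Fin.succ_ne_zero, pderiv_X_of_ne, pderiv_C_mul]
  simp [map_ofNat, map_mul]
  ring

theorem pds0 (j : Fin m) : pderiv j.succ (P0 m r k₀ k₁) = C (r j) := by
  simp only [P0, E, map_add, pderiv_pow, pderiv_X, pderiv_C_mul, pderiv_C, map_sum,
    Pi.single_apply, Fin.succ_inj, (Fin.succ_ne_zero j).symm, eq_comm (a := (0 : Fin (m+1)))]
  simp [Finset.sum_ite_eq', eq_comm (a := j)]

theorem pd0s (j : Fin m) : pderiv 0 (Pj m A r s j) = C (r j) := by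
  simp [Pj, pderiv_X, Fin.succ_ne_zero, pderiv_X_of_ne, pderiv_C_mul]

theorem pdss (j k : Fin m) : pderiv k.succ (Pj m A r s j) = C (A j k + A k j) := by
  simp only [Pj, map_add, pderiv_X, pderiv_C_mul, pderiv_C, map_sum,
    Fin.succ_inj, (Fin.succ_ne_zero k).symm, eq_comm (a := (0 : Fin (m+1)))]
  simp [Pi.single_apply, Fin.succ_inj, Finset.sum_ite_eq', eq_comm (a := k), mul_ite, ite_mul,
    (Fin.succ_ne_zero k).symm]

theorem g1 : gradSq (fcmc m A r s k₀ k₁) = (P0 m r k₀ k₁)^2 + S2 m A r s := by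
  simp [gradSq, S2, Fin.sum_univ_succ, pd0, pds]

theorem g2 : lap (fcmc m A r s k₀ k₁) = C 6 * X 0 + C (2*k₀) + C (2*A.trace) := by
  simp only [lap, Fin.sum_univ_succ, pd0, pds, pd00, pdss]
  have h : ∑ x : Fin m, (A x x + A x x) = 2*A.trace := by
    simp [Matrix.trace, Matrix.diag, two_mul, Finset.sum_add_distrib]
  rw [← map_sum, h]

theorem g3 : pderiv 0 (gradSq (fcmc m A r s k₀ k₁)) =
    2 * P0 m r k₀ k₁ * (C 6 * X 0 + C (2*k₀)) + 2 * T m A r s := by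
  rw [g1]
  simp only [map_add, pderiv_pow, pd00, map_sum, pd0s, S2, T, Finset.mul_sum]
  congr 1
  · push_cast; ring
  · exact Finset.sum_congr rfl fun _ _ => by push_cast; ring

theorem g4 (j : Fin m) : pderiv j.succ (gradSq (fcmc m A r s k₀ k₁)) =
    2 * P0 m r k₀ k₁ * C (r j) + 2 * ∑ k, Pj m A r s k * C (A k j + A j k) := by
  rw [g1]
  simp only [map_add, pderiv_pow, pds0, map_sum, pdss, S2, Finset.mul_sum]
  congr 1
  · push_cast; ring
  · exact Finset.sum_congr rfl fun _ _ => by push_cast; ring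

theorem master : delta1 (fcmc m A r s k₀ k₁) =
    2 * C (2*A.trace) * (P0 m r k₀ k₁)^2
    + (C 12 * X 0 + 2 * C (2*k₀) + 2 * C (2*A.trace)) * S2 m A r s
    - 4 * P0 m r k₀ k₁ * T m A r s - 2 * U m A r s := by
  simp only [delta1, Fin.sum_univ_succ, pd0, pds, g2, g3, g4]
  rw [g1]
  have h1 : ∑ j, Pj m A r s j *
      (2 * P0 m r k₀ k₁ * C (r j) + 2 * ∑ k, Pj m A r s k * C (A k j + A j k))
      = 2 * P0 m r k₀ k₁ * T m A r s + 2 * U m A r s := by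
    rw [T, U, Finset.mul_sum, Finset.mul_sum, ← Finset.sum_add_distrib]
    exact Finset.sum_congr rfl fun _ _ => by ring
  rw [h1]
  simp only [map_ofNat]
  ring

-- degree bound helpers
theorem tdsum {ι : Type*} (t : Finset ι) (f : ι → MvPolynomial (Fin (m+1)) ℝ) (d : ℕ)
    (h : ∀ i ∈ t, (f i).totalDegree ≤ d) : (∑ i ∈ t, f i).totalDegree ≤ d :=
  (totalDegree_finset_sum t f).trans (Finset.sup_le h)

theorem tdadd {p q : MvPolynomial (Fin (m+1)) ℝ} {d : ℕ} (hp : p.totalDegree ≤ d)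
    (hq : q.totalDegree ≤ d) : (p + q).totalDegree ≤ d :=
  (totalDegree_add p q).trans (max_le hp hq)

theorem tdsub {p q : MvPolynomial (Fin (m+1)) ℝ} {d : ℕ} (hp : p.totalDegree ≤ d)
    (hq : q.totalDegree ≤ d) : (p - q).totalDegree ≤ d :=
  (totalDegree_sub p q).trans (max_le hp hq)

theorem tdmul {p q : MvPolynomial (Fin (m+1)) ℝ} {d e : ℕ} (hp : p.totalDegree ≤ d)
    (hq : q.totalDegree ≤ e) : (p * q).totalDegree ≤ d + e :=
  (totalDegree_mul p q).trans (Nat.add_le_add hp hq)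

theorem tdCmul {a : ℝ} {q : MvPolynomial (Fin (m+1)) ℝ} {e : ℕ} (hq : q.totalDegree ≤ e) :
    (C a * q).totalDegree ≤ e := by
  simpa using tdmul m (le_of_eq (totalDegree_C a)) hq

theorem tdX : (X 0 : MvPolynomial (Fin (m+1)) ℝ).totalDegree ≤ 1 := (totalDegree_X _).le

theorem degE : (E m r k₀ k₁).totalDegree ≤ 1 := by
  apply tdadd m (tdadd m ?_ ?_) ?_
  · exact tdCmul m (tdX m)
  · exact tdsum m _ _ 1 fun i _ => tdCmul m ((totalDegree_X _).le)
  · simp [totalDegree_C]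

theorem degPj (j : Fin m) : (Pj m A r s j).totalDegree ≤ 1 := by
  apply tdadd m (tdadd m ?_ ?_) ?_
  · exact tdsum m _ _ 1 fun i _ => tdCmul m ((totalDegree_X _).le)
  · exact tdCmul m ((totalDegree_X _).le)
  · simp [totalDegree_C]

theorem degP0 : (P0 m r k₀ k₁).totalDegree ≤ 2 := by
  apply tdadd m ?_ ((degE m r k₀ k₁).trans one_le_two)
  apply tdCmul m
  simpa using totalDegree_pow (X 0 : MvPolynomial (Fin (m+1)) ℝ) 2 |>.trans (by simp)

theorem degS2 : (S2 m A r s).totalDegree ≤ 2 := by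
  refine tdsum m _ _ 2 fun j _ => ?_
  exact (totalDegree_pow _ 2).trans (by simpa [two_mul] using Nat.add_le_add (degPj m A r s j) (degPj m A r s j))

theorem degT : (T m A r s).totalDegree ≤ 1 := by
  refine tdsum m _ _ 1 fun j _ => ?_
  simpa using tdmul m (degPj m A r s j) (le_of_eq (totalDegree_C _))

theorem degU : (U m A r s).totalDegree ≤ 2 := by
  refine tdsum m _ _ 2 fun j _ => ?_
  have hs : (∑ k, Pj m A r s k * C (A k j + A j k)).totalDegree ≤ 1 :=
    tdsum m _ _ 1 fun k _ =>
      le_trans (tdmul m (degPj m A r s k) (le_of_eq (totalDegree_C _))) (by norm_num)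
  simpa using tdmul m (degPj m A r s j) hs

noncomputable def R17 : MvPolynomial (Fin (m+1)) ℝ :=
  2 * C (2*A.trace) * (2 * (C 3 * X 0^2) * E m r k₀ k₁ + (E m r k₀ k₁)^2)
  + (C 12 * X 0 + 2 * C (2*k₀) + 2 * C (2*A.trace)) * S2 m A r s
  - 4 * P0 m r k₀ k₁ * T m A r s - 2 * U m A r s

theorem key : delta1 (fcmc m A r s k₀ k₁) =
    C (36*A.trace) * X 0 ^ 4 + R17 m A r s k₀ k₁ := by
  rw [master, R17]
  simp only [P0, map_mul, map_ofNat]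
  ring

theorem tdnum {q : MvPolynomial (Fin (m+1)) ℝ} {e : ℕ} (n : ℕ) [n.AtLeastTwo]
    (hq : q.totalDegree ≤ e) : ((OfNat.ofNat n : MvPolynomial (Fin (m+1)) ℝ) * q).totalDegree ≤ e := by
  rw [← map_ofNat (C : ℝ →+* MvPolynomial (Fin (m+1)) ℝ) n]
  exact tdCmul m hq

theorem degR : (R17 m A r s k₀ k₁).totalDegree ≤ 3 := by
  rw [R17]
  apply tdsub m (tdsub m (tdadd m ?_ ?_) ?_) ?_
  · have hc : ((2 : MvPolynomial (Fin (m+1)) ℝ) * C (2*A.trace)).totalDegree ≤ 0 :=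
      tdnum m 2 (le_of_eq (totalDegree_C _))
    have hx2 : ((C 3 : MvPolynomial (Fin (m+1)) ℝ) * X 0 ^ 2).totalDegree ≤ 2 :=
      tdCmul m ((totalDegree_pow (X 0 : MvPolynomial (Fin (m+1)) ℝ) 2).trans (by simp))
    have hin : ((2 : MvPolynomial (Fin (m+1)) ℝ) * (C 3 * X 0^2) * E m r k₀ k₁
        + (E m r k₀ k₁)^2).totalDegree ≤ 3 := by
      apply tdadd m
      · simpa using tdmul m (tdnum m 2 hx2) (degE m r k₀ k₁)
      · exact ((totalDegree_pow (E m r k₀ k₁) 2).trans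
          (by simpa [two_mul] using Nat.add_le_add (degE m r k₀ k₁) (degE m r k₀ k₁))).trans (by norm_num)
    simpa using tdmul m hc hin
  · have h1 : (C 12 * X 0 + 2 * C (2*k₀) + 2 * C (2*A.trace) : MvPolynomial (Fin (m+1)) ℝ).totalDegree ≤ 1 := by
      apply tdadd m (tdadd m (tdCmul m (tdX m)) ?_) ?_
      · exact (tdnum m 2 (le_of_eq (totalDegree_C _))).trans (by norm_num)
      · exact (tdnum m 2 (le_of_eq (totalDegree_C _))).trans (by norm_num)
    simpa using tdmul m h1 (degS2 m A r s)
  · have := tdmul m (tdnum m 4 (degP0 m r k₀ k₁)) (degT m A r s)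
    simpa using this
  · exact (tdnum m 2 (degU m A r s)).trans (by norm_num)

end Aux17

theorem stmt_17 (m : ℕ) (A : Matrix (Fin m) (Fin m) ℝ) (hA : A.IsSymm)
    (r s : Fin m → ℝ) (k₀ k₁ : ℝ) :
    ((delta1 (fcmc m A r s k₀ k₁)) ^ 2
      - C (6 ^ 4 * A.trace ^ 2) * X 0 ^ 8).totalDegree ≤ 7 := by
  have key := Aux17.key m A r s k₀ k₁
  set Rp := Aux17.R17 m A r s k₀ k₁ with hR
  set a : MvPolynomial (Fin (m+1)) ℝ := C (36*A.trace) * X 0 ^ 4 with ha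
  have ha2 : C (6 ^ 4 * A.trace ^ 2) * X 0 ^ 8 = a ^ 2 := by
    rw [ha]
    rw [show (6:ℝ)^4 * A.trace^2 = (36*A.trace)^2 by ring, map_pow]
    ring
  have hexp : (a + Rp)^2 - a^2 = Rp * Rp + (a * Rp + a * Rp) := by ring
  rw [key, ha2, hexp]
  have hRd := Aux17.degR m A r s k₀ k₁
  have hda : a.totalDegree ≤ 4 := by
    rw [ha]
    apply Aux17.tdCmul m
    exact (totalDegree_pow _ 4).trans (by simp)
  have h1 : (Rp * Rp).totalDegree ≤ 7 :=
    (Aux17.tdmul m hRd hRd).trans (by norm_num)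
  have h2 : (a * Rp).totalDegree ≤ 7 := Aux17.tdmul m hda hRd
  exact Aux17.tdadd m h1 (Aux17.tdadd m h2 h2)
end
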